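/- arXiv:2503.13219 — 6 statements merged into one kernel-verified Lean document; each statement's English description precedes it below -/
import Mathlib

section
/- Let γ: [0,T)×[-1,1] → ℝⁿ be a fixed-length free-boundary elastic flow (FLFB-EF). Then for all t ∈ [0,T) and x ∈ {−1,1}: (∂_s^⊥)³κ(t,x) + τ₀(x) S_{γ(t,x)} (∂_s^⊥)²κ(t,x) + ⟨κ(t,x), ∂_s^⊥κ(t,x)⟩ κ(t,x) = 0. -/
open Set MeasureTheory Filter
open scoped RealInnerProductSpace

noncomputable section

variable {n : ℕ}

/-- Arc-length derivative along the curve `g` of a field `f`. -/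
def aderiv {F : Type*} [NormedAddCommGroup F] [NormedSpace ℝ F]
    (g : ℝ → EuclideanSpace ℝ (Fin n)) (f : ℝ → F) : ℝ → F :=
  fun x => ‖deriv g x‖⁻¹ • deriv f x

/-- Unit tangent `∂ₛγ`. -/
def utang (g : ℝ → EuclideanSpace ℝ (Fin n)) : ℝ → EuclideanSpace ℝ (Fin n) :=
  aderiv g g

/-- Normal projection along `g`. -/
def nperp (g f : ℝ → EuclideanSpace ℝ (Fin n)) : ℝ → EuclideanSpace ℝ (Fin n) :=
  fun x => f x - ⟪f x, utang g x⟫ • utang g x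

/-- Curvature vector `κ = ∂ₛ²γ`. -/
def curvV (g : ℝ → EuclideanSpace ℝ (Fin n)) : ℝ → EuclideanSpace ℝ (Fin n) :=
  aderiv g (utang g)

/-- Projected arc-length derivative `∂ₛ^⊥`. -/
def aderivP (g f : ℝ → EuclideanSpace ℝ (Fin n)) : ℝ → EuclideanSpace ℝ (Fin n) :=
  nperp g (aderiv g f)

/-- Iterated projected arc-length derivative `(∂ₛ^⊥)^k`. -/
def aderivPIter (g : ℝ → EuclideanSpace ℝ (Fin n)) :
    ℕ → (ℝ → EuclideanSpace ℝ (Fin n)) → ℝ → EuclideanSpace ℝ (Fin n)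
  | 0, f => f
  | k + 1, f => aderivP g (aderivPIter g k f)

/-- Iterated full arc-length derivative `∂ₛ^k`. -/
def aderivIter (g : ℝ → EuclideanSpace ℝ (Fin n)) :
    ℕ → (ℝ → EuclideanSpace ℝ (Fin n)) → ℝ → EuclideanSpace ℝ (Fin n)
  | 0, f => f
  | k + 1, f => aderiv g (aderivIter g k f)

/-- Elastic energy `E(γ) = ∫ |κ|² ds`. -/
def elE (g : ℝ → EuclideanSpace ℝ (Fin n)) : ℝ :=
  ∫ x in (-1:ℝ)..1, ‖curvV g x‖ ^ 2 * ‖deriv g x‖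

/-- Length `L(γ) = ∫ ds`. -/
def elL (g : ℝ → EuclideanSpace ℝ (Fin n)) : ℝ :=
  ∫ x in (-1:ℝ)..1, ‖deriv g x‖

/-- Energy gradient `∇E(γ) = 2(∂ₛ^⊥)²κ + |κ|²κ`. -/
def gradElE (g : ℝ → EuclideanSpace ℝ (Fin n)) : ℝ → EuclideanSpace ℝ (Fin n) :=
  fun x => (2:ℝ) • aderivPIter g 2 (curvV g) x + ‖curvV g x‖ ^ 2 • curvV g x

/-- Lagrange multiplier `λ(γ)`. -/
def lagMul (g : ℝ → EuclideanSpace ℝ (Fin n)) : ℝ :=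
  (∫ x in (-1:ℝ)..1, ⟪gradElE g x, curvV g x⟫ * ‖deriv g x‖) / elE g

/-- Time derivative `∂ₜγ` of a family. -/
def timeD (γ : ℝ → ℝ → EuclideanSpace ℝ (Fin n)) : ℝ → ℝ → EuclideanSpace ℝ (Fin n) :=
  fun t x => deriv (fun s => γ s x) t

/-- Tangential speed `φ = ⟨∂ₜγ, ∂ₛγ⟩`. -/
def tanSpeed (γ : ℝ → ℝ → EuclideanSpace ℝ (Fin n)) : ℝ → ℝ → ℝ :=
  fun t x => ⟪timeD γ t x, utang (γ t) x⟫

/-- Normal velocity `V = ∂ₜγ − φ ∂ₛγ`. -/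
def normalVel (γ : ℝ → ℝ → EuclideanSpace ℝ (Fin n)) : ℝ → ℝ → EuclideanSpace ℝ (Fin n) :=
  fun t x => timeD γ t x - tanSpeed γ t x • utang (γ t) x

/-- Normal time derivative `∂ₜ^⊥N` of a field along the family γ. -/
def timeDPerp (γ N : ℝ → ℝ → EuclideanSpace ℝ (Fin n)) : ℝ → ℝ → EuclideanSpace ℝ (Fin n) :=
  fun t x => deriv (fun s => N s x) t
    - ⟪deriv (fun s => N s x) t, utang (γ t) x⟫ • utang (γ t) x

/-- Shape operator `S_p = −Dξ(p)`. -/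
def shapeOp (ξ : EuclideanSpace ℝ (Fin n) → EuclideanSpace ℝ (Fin n))
    (p v : EuclideanSpace ℝ (Fin n)) : EuclideanSpace ℝ (Fin n) :=
  -(fderiv ℝ ξ p v)

/-- `L²(ds)` norm of a field along `g`. -/
def l2ds (g f : ℝ → EuclideanSpace ℝ (Fin n)) : ℝ :=
  Real.sqrt (∫ x in (-1:ℝ)..1, ‖f x‖ ^ 2 * ‖deriv g x‖)

/-- Fixed-length free-boundary elastic flow on `[0,T)`. -/
def IsFLFBEF (T : ℝ) (ξ : EuclideanSpace ℝ (Fin n) → EuclideanSpace ℝ (Fin n))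
    (τ : ℝ → ℝ) (γ : ℝ → ℝ → EuclideanSpace ℝ (Fin n)) : Prop :=
  ContDiff ℝ (⊤ : ℕ∞) (fun p : ℝ × ℝ => γ p.1 p.2) ∧
  (∀ t ∈ Ico (0:ℝ) T, ∀ x ∈ Icc (-1:ℝ) 1, deriv (γ t) x ≠ 0) ∧
  (∀ t ∈ Ico (0:ℝ) T, 0 < elE (γ t)) ∧
  (∀ t ∈ Ico (0:ℝ) T, ∀ x ∈ Icc (-1:ℝ) 1,
    timeD γ t x = -(gradElE (γ t) x - lagMul (γ t) • curvV (γ t) x)) ∧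
  (∀ t ∈ Ico (0:ℝ) T, ∀ x ∈ ({-1, 1} : Set ℝ),
    ⟪timeD γ t x, utang (γ t) x⟫ = 0 ∧
    utang (γ t) x = τ x • ξ (γ t x) ∧
    ‖ξ (γ t x)‖ = 1 ∧
    aderivP (γ t) (curvV (γ t)) x = -(τ x • shapeOp ξ (γ t x) (curvV (γ t) x)))


namespace S6Aux

variable {n : ℕ}

/-- partial derivative in the second (space) variable -/
def pdx (g : ℝ × ℝ → EuclideanSpace ℝ (Fin n)) (p : ℝ × ℝ) : EuclideanSpace ℝ (Fin n) :=
  fderiv ℝ g p (0, 1)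

/-- partial derivative in the first (time) variable -/
def pdt (g : ℝ × ℝ → EuclideanSpace ℝ (Fin n)) (p : ℝ × ℝ) : EuclideanSpace ℝ (Fin n) :=
  fderiv ℝ g p (1, 0)

/-- joint arclength derivative -/
def adx (g F : ℝ × ℝ → EuclideanSpace ℝ (Fin n)) (p : ℝ × ℝ) : EuclideanSpace ℝ (Fin n) :=
  ‖pdx g p‖⁻¹ • fderiv ℝ F p (0, 1)

/-- joint unit tangent -/
def tg (g : ℝ × ℝ → EuclideanSpace ℝ (Fin n)) : ℝ × ℝ → EuclideanSpace ℝ (Fin n) :=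
  adx g g

/-- joint normal projection -/
def np (g F : ℝ × ℝ → EuclideanSpace ℝ (Fin n)) (p : ℝ × ℝ) : EuclideanSpace ℝ (Fin n) :=
  F p - ⟪F p, tg g p⟫ • tg g p

/-- joint iterated projected derivatives of the curvature: `kk g 0 = κ`, `kk g (k+1) = ∂ₛ^⊥ (kk g k)` -/
def kk (g : ℝ × ℝ → EuclideanSpace ℝ (Fin n)) : ℕ → ℝ × ℝ → EuclideanSpace ℝ (Fin n)
  | 0 => adx g (tg g)
  | k + 1 => np g (adx g (kk g k))

section slices

variable {F : Type*} [NormedAddCommGroup F] [NormedSpace ℝ F]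

theorem hasDerivAt_sliceX (G : ℝ × ℝ → F) {t x : ℝ} (hG : DifferentiableAt ℝ G (t, x)) :
    HasDerivAt (fun y => G (t, y)) (fderiv ℝ G (t, x) (0, 1)) x := by
  have h1 : HasDerivAt (fun y : ℝ => ((t, y) : ℝ × ℝ)) (0, 1) x :=
    (hasDerivAt_const x t).prodMk (hasDerivAt_id x)
  exact (hG.hasFDerivAt.comp_hasDerivAt x h1 : HasDerivAt ((fun p => G p) ∘ fun y => (t, y)) _ x)

theorem hasDerivAt_sliceT (G : ℝ × ℝ → F) {t x : ℝ} (hG : DifferentiableAt ℝ G (t, x)) :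
    HasDerivAt (fun s => G (s, x)) (fderiv ℝ G (t, x) (1, 0)) t := by
  have h1 : HasDerivAt (fun s : ℝ => ((s, x) : ℝ × ℝ)) (1, 0) t :=
    (hasDerivAt_id t).prodMk (hasDerivAt_const t x)
  exact (hG.hasFDerivAt.comp_hasDerivAt t h1 : HasDerivAt ((fun p => G p) ∘ fun s => (s, x)) _ t)

end slices

theorem contDiff_pdx {g : ℝ × ℝ → EuclideanSpace ℝ (Fin n)} (hg : ContDiff ℝ (⊤ : ℕ∞) g) :
    ContDiff ℝ (⊤ : ℕ∞) (pdx g) :=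
  (hg.fderiv_right (by simp)).clm_apply contDiff_const

theorem contDiff_pdt {g : ℝ × ℝ → EuclideanSpace ℝ (Fin n)} (hg : ContDiff ℝ (⊤ : ℕ∞) g) :
    ContDiff ℝ (⊤ : ℕ∞) (pdt g) :=
  (hg.fderiv_right (by simp)).clm_apply contDiff_const

theorem contDiffAt_adx {g F : ℝ × ℝ → EuclideanSpace ℝ (Fin n)} (hg : ContDiff ℝ (⊤ : ℕ∞) g)
    {p : ℝ × ℝ} (hF : ContDiffAt ℝ (⊤ : ℕ∞) F p) (hp : pdx g p ≠ 0) :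
    ContDiffAt ℝ (⊤ : ℕ∞) (adx g F) p := by
  have h1 : ContDiffAt ℝ (⊤ : ℕ∞) (fun q => ‖pdx g q‖) p :=
    (contDiff_pdx hg).contDiffAt.norm ℝ hp
  exact (h1.inv (norm_ne_zero_iff.mpr hp)).smul ((hF.fderiv_right (by simp)).clm_apply contDiffAt_const)

theorem contDiffAt_tg {g : ℝ × ℝ → EuclideanSpace ℝ (Fin n)} (hg : ContDiff ℝ (⊤ : ℕ∞) g)
    {p : ℝ × ℝ} (hp : pdx g p ≠ 0) : ContDiffAt ℝ (⊤ : ℕ∞) (tg g) p :=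
  contDiffAt_adx hg hg.contDiffAt hp

theorem contDiffAt_np {g F : ℝ × ℝ → EuclideanSpace ℝ (Fin n)} (hg : ContDiff ℝ (⊤ : ℕ∞) g)
    {p : ℝ × ℝ} (hF : ContDiffAt ℝ (⊤ : ℕ∞) F p) (hp : pdx g p ≠ 0) :
    ContDiffAt ℝ (⊤ : ℕ∞) (np g F) p := by
  have htg := contDiffAt_tg hg hp
  exact hF.sub ((hF.inner ℝ htg).smul htg)

theorem contDiffAt_kk {g : ℝ × ℝ → EuclideanSpace ℝ (Fin n)} (hg : ContDiff ℝ (⊤ : ℕ∞) g)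
    (k : ℕ) {p : ℝ × ℝ} (hp : pdx g p ≠ 0) : ContDiffAt ℝ (⊤ : ℕ∞) (kk g k) p := by
  induction k with
  | zero => exact contDiffAt_adx hg (contDiffAt_tg hg hp) hp
  | succ k ih => exact contDiffAt_np hg (contDiffAt_adx hg ih hp) hp

section Bridge

variable {n : ℕ} {γ : ℝ → ℝ → EuclideanSpace ℝ (Fin n)}

theorem deriv_eq_pdx (hg : ContDiff ℝ (⊤ : ℕ∞) (fun p : ℝ × ℝ => γ p.1 p.2)) (t x : ℝ) :
    deriv (γ t) x = pdx (fun p : ℝ × ℝ => γ p.1 p.2) (t, x) := by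
  have h := hasDerivAt_sliceX (fun p : ℝ × ℝ => γ p.1 p.2)
    (hg.differentiable (by simp)).differentiableAt (t := t) (x := x)
  exact h.deriv

theorem utang_eq_tg (hg : ContDiff ℝ (⊤ : ℕ∞) (fun p : ℝ × ℝ => γ p.1 p.2)) (t x : ℝ) :
    utang (γ t) x = tg (fun p : ℝ × ℝ => γ p.1 p.2) (t, x) := by
  show ‖deriv (γ t) x‖⁻¹ • deriv (γ t) x
    = ‖pdx (fun p : ℝ × ℝ => γ p.1 p.2) (t, x)‖⁻¹ • fderiv ℝ (fun p : ℝ × ℝ => γ p.1 p.2) (t, x) (0, 1)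
  rw [deriv_eq_pdx hg]; rfl

theorem timeD_eq_pdt (hg : ContDiff ℝ (⊤ : ℕ∞) (fun p : ℝ × ℝ => γ p.1 p.2)) (t x : ℝ) :
    timeD γ t x = pdt (fun p : ℝ × ℝ => γ p.1 p.2) (t, x) := by
  have h := hasDerivAt_sliceT (fun p : ℝ × ℝ => γ p.1 p.2)
    (hg.differentiable (by simp)).differentiableAt (t := t) (x := x)
  exact h.deriv

theorem bridge_aderiv (hg : ContDiff ℝ (⊤ : ℕ∞) (fun p : ℝ × ℝ => γ p.1 p.2))
    {f : ℝ → EuclideanSpace ℝ (Fin n)} {F : ℝ × ℝ → EuclideanSpace ℝ (Fin n)} {t x : ℝ}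
    (hF : DifferentiableAt ℝ F (t, x)) (hf : f =ᶠ[nhds x] fun y => F (t, y)) :
    aderiv (γ t) f x = adx (fun p : ℝ × ℝ => γ p.1 p.2) F (t, x) := by
  show ‖deriv (γ t) x‖⁻¹ • deriv f x = _
  rw [deriv_eq_pdx hg, hf.deriv_eq, (hasDerivAt_sliceX F hF).deriv]
  rfl

theorem bridge_nperp (hg : ContDiff ℝ (⊤ : ℕ∞) (fun p : ℝ × ℝ => γ p.1 p.2))
    {f : ℝ → EuclideanSpace ℝ (Fin n)} {F : ℝ × ℝ → EuclideanSpace ℝ (Fin n)} {t x : ℝ}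
    (hfx : f x = F (t, x)) :
    nperp (γ t) f x = np (fun p : ℝ × ℝ => γ p.1 p.2) F (t, x) := by
  show f x - ⟪f x, utang (γ t) x⟫ • utang (γ t) x = _
  rw [utang_eq_tg hg, hfx]; rfl

theorem ev_ne_pdx (hg : ContDiff ℝ (⊤ : ℕ∞) (fun p : ℝ × ℝ => γ p.1 p.2)) {t x : ℝ}
    (hp : pdx (fun p : ℝ × ℝ => γ p.1 p.2) (t, x) ≠ 0) :
    ∀ᶠ y in nhds x, pdx (fun p : ℝ × ℝ => γ p.1 p.2) (t, y) ≠ 0 := by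
  have hc : ContinuousAt (fun y => pdx (fun p : ℝ × ℝ => γ p.1 p.2) (t, y)) x :=
    ((contDiff_pdx hg).continuous.comp (by continuity)).continuousAt
  exact hc.eventually_ne hp

theorem bridge_curv (hg : ContDiff ℝ (⊤ : ℕ∞) (fun p : ℝ × ℝ => γ p.1 p.2)) {t x : ℝ}
    (hp : pdx (fun p : ℝ × ℝ => γ p.1 p.2) (t, x) ≠ 0) :
    curvV (γ t) x = kk (fun p : ℝ × ℝ => γ p.1 p.2) 0 (t, x) := by
  have h := bridge_aderiv (γ := γ) hg (f := utang (γ t)) (F := tg (fun p : ℝ × ℝ => γ p.1 p.2))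
    ((contDiffAt_tg hg hp).differentiableAt (by simp))
    (Filter.Eventually.of_forall fun y => utang_eq_tg hg t y)
  exact h

theorem bridge_kk (hg : ContDiff ℝ (⊤ : ℕ∞) (fun p : ℝ × ℝ => γ p.1 p.2)) (k : ℕ) :
    ∀ t x : ℝ, pdx (fun p : ℝ × ℝ => γ p.1 p.2) (t, x) ≠ 0 →
      aderivPIter (γ t) k (curvV (γ t)) x = kk (fun p : ℝ × ℝ => γ p.1 p.2) k (t, x) := by
  induction k with
  | zero => exact fun t x hp => bridge_curv hg hp
  | succ k ih =>
    intro t x hp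
    have hev : (fun y => aderivPIter (γ t) k (curvV (γ t)) y)
        =ᶠ[nhds x] fun y => kk (fun p : ℝ × ℝ => γ p.1 p.2) k (t, y) :=
      (ev_ne_pdx hg hp).mono fun y hy => ih t y hy
    have had := bridge_aderiv (γ := γ) hg
      (f := aderivPIter (γ t) k (curvV (γ t))) (F := kk (fun p : ℝ × ℝ => γ p.1 p.2) k)
      ((contDiffAt_kk hg k hp).differentiableAt (by simp)) hev
    exact bridge_nperp hg had

end Bridge
section Core

variable {n : ℕ}

theorem tg_eq (g : ℝ × ℝ → EuclideanSpace ℝ (Fin n)) (p : ℝ × ℝ) :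
    tg g p = ‖pdx g p‖⁻¹ • pdx g p := rfl

theorem norm_tg {g : ℝ × ℝ → EuclideanSpace ℝ (Fin n)} {p : ℝ × ℝ} (hp : pdx g p ≠ 0) :
    ‖tg g p‖ = 1 := by
  rw [tg_eq, norm_smul, norm_inv, norm_norm]
  exact inv_mul_cancel₀ (norm_ne_zero_iff.mpr hp)

theorem ev_ne_pdx' {g : ℝ × ℝ → EuclideanSpace ℝ (Fin n)} (hg : ContDiff ℝ (⊤ : ℕ∞) g)
    {t x : ℝ} (hp : pdx g (t, x) ≠ 0) : ∀ᶠ y in nhds x, pdx g (t, y) ≠ 0 := by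
  have hc : ContinuousAt (fun y => pdx g (t, y)) x :=
    ((contDiff_pdx hg).continuous.comp (by continuity)).continuousAt
  exact hc.eventually_ne hp

theorem inner_kk0_tg {g : ℝ × ℝ → EuclideanSpace ℝ (Fin n)} (hg : ContDiff ℝ (⊤ : ℕ∞) g)
    {t x : ℝ} (hp : pdx g (t, x) ≠ 0) :
    ⟪kk g 0 (t, x), tg g (t, x)⟫ = 0 := by
  set u : ℝ → EuclideanSpace ℝ (Fin n) := fun y => tg g (t, y) with hu
  have hdu : HasDerivAt u (fderiv ℝ (tg g) (t, x) (0, 1)) x :=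
    hasDerivAt_sliceX (tg g) ((contDiffAt_tg hg hp).differentiableAt (by simp))
  set u' := fderiv ℝ (tg g) (t, x) (0, 1)
  have h1 : HasDerivAt (fun y => ⟪u y, u y⟫) (⟪u x, u'⟫ + ⟪u', u x⟫) x := hdu.inner ℝ hdu
  have h2 : HasDerivAt (fun y => ⟪u y, u y⟫) 0 x := by
    refine (hasDerivAt_const x (1:ℝ)).congr_of_eventuallyEq ?_
    filter_upwards [ev_ne_pdx' hg hp] with y hy
    rw [real_inner_self_eq_norm_sq, norm_tg hy]; norm_num
  have h3 : ⟪u x, u'⟫ + ⟪u', u x⟫ = 0 := h1.unique h2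
  have h4 : ⟪u', u x⟫ = 0 := by
    have hc := real_inner_comm (u x) u'
    linarith
  show ⟪‖pdx g (t, x)‖⁻¹ • fderiv ℝ (tg g) (t, x) (0, 1), tg g (t, x)⟫ = 0
  rw [real_inner_smul_left]
  exact mul_eq_zero.mpr (Or.inr h4)

theorem pdx_pdt_symm {g : ℝ × ℝ → EuclideanSpace ℝ (Fin n)} (hg : ContDiff ℝ (⊤ : ℕ∞) g)
    (p : ℝ × ℝ) : fderiv ℝ (pdx g) p (1, 0) = fderiv ℝ (pdt g) p (0, 1) := by
  set D := fderiv ℝ (fderiv ℝ g) p with hD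
  have hd : ∀ q, HasFDerivAt g (fderiv ℝ g q) q := fun q =>
    ((hg.differentiable (by simp)) q).hasFDerivAt
  have h5 : ContDiff ℝ (⊤ : ℕ∞) (fderiv ℝ g) := hg.fderiv_right (by simp)
  have hDd : HasFDerivAt (fderiv ℝ g) D p := ((h5.differentiable (by simp)) p).hasFDerivAt
  have hsymm := second_derivative_symmetric hd hDd
  have hx : fderiv ℝ (pdx g) p = (ContinuousLinearMap.apply ℝ (EuclideanSpace ℝ (Fin n))
      ((0:ℝ), (1:ℝ))).comp D := by
    exact (((ContinuousLinearMap.apply ℝ (EuclideanSpace ℝ (Fin n)) ((0:ℝ),(1:ℝ))).hasFDerivAt).comp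
      p hDd).fderiv
  have ht : fderiv ℝ (pdt g) p = (ContinuousLinearMap.apply ℝ (EuclideanSpace ℝ (Fin n))
      ((1:ℝ), (0:ℝ))).comp D := by
    exact (((ContinuousLinearMap.apply ℝ (EuclideanSpace ℝ (Fin n)) ((1:ℝ),(0:ℝ))).hasFDerivAt).comp
      p hDd).fderiv
  rw [hx, ht]
  exact hsymm _ _

end Core
section StepA

variable {n : ℕ}

theorem adx_pdt_eq {g : ℝ × ℝ → EuclideanSpace ℝ (Fin n)} (hg : ContDiff ℝ (⊤ : ℕ∞) g)
    (t x : ℝ) : adx g (pdt g) (t, x) = ‖pdx g (t, x)‖⁻¹ • fderiv ℝ (pdx g) (t, x) (1, 0) := by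
  show ‖pdx g (t, x)‖⁻¹ • fderiv ℝ (pdt g) (t, x) (0, 1) = _
  rw [← pdx_pdt_symm hg]

theorem hasDerivAt_tg_sliceT {g : ℝ × ℝ → EuclideanSpace ℝ (Fin n)}
    (hg : ContDiff ℝ (⊤ : ℕ∞) g) {t x : ℝ} (hp : pdx g (t, x) ≠ 0) :
    HasDerivAt (fun s => tg g (s, x)) (np g (adx g (pdt g)) (t, x)) t := by
  have hwdiff : DifferentiableAt ℝ (pdx g) (t, x) :=
    ((contDiff_pdx hg).differentiable (by simp)).differentiableAt
  have hw : HasDerivAt (fun s => pdx g (s, x)) (fderiv ℝ (pdx g) (t, x) (1, 0)) t :=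
    hasDerivAt_sliceT (pdx g) hwdiff
  set W' := fderiv ℝ (pdx g) (t, x) (1, 0) with hW'
  set v := pdx g (t, x) with hv
  set r := ‖v‖ with hr
  have hr0 : r ≠ 0 := norm_ne_zero_iff.mpr hp
  have hinner0 : ⟪v, v⟫ ≠ 0 := by
    rw [real_inner_self_eq_norm_sq]
    positivity
  have hq : HasDerivAt (fun s => ⟪pdx g (s, x), pdx g (s, x)⟫) (⟪v, W'⟫ + ⟪W', v⟫) t :=
    hw.inner ℝ hw
  have hsq : HasDerivAt (fun s => Real.sqrt ⟪pdx g (s, x), pdx g (s, x)⟫)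
      ((1 / (2 * Real.sqrt ⟪v, v⟫)) * (⟪v, W'⟫ + ⟪W', v⟫)) t :=
    (Real.hasDerivAt_sqrt hinner0).comp t hq
  have hfun : (fun s => Real.sqrt ⟪pdx g (s, x), pdx g (s, x)⟫) = fun s => ‖pdx g (s, x)‖ := by
    funext s
    rw [real_inner_self_eq_norm_sq, Real.sqrt_sq (norm_nonneg _)]
  have hsqrtv : Real.sqrt ⟪v, v⟫ = r := by
    rw [real_inner_self_eq_norm_sq, Real.sqrt_sq (norm_nonneg _)]
  rw [hfun] at hsq
  have hval : (1 / (2 * Real.sqrt ⟪v, v⟫)) * (⟪v, W'⟫ + ⟪W', v⟫) = ⟪W', v⟫ / r := by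
    rw [hsqrtv, real_inner_comm v W']
    field_simp
    ring
  rw [hval] at hsq
  have hinv : HasDerivAt (fun s => ‖pdx g (s, x)‖⁻¹) (-(⟪W', v⟫ / r) / r ^ 2) t :=
    hsq.inv hr0
  have hfinal : HasDerivAt (fun s => ‖pdx g (s, x)‖⁻¹ • pdx g (s, x))
      (r⁻¹ • W' + (-(⟪W', v⟫ / r) / r ^ 2) • v) t := by
    have := hinv.smul hw
    exact this
  have hfun2 : (fun s => tg g (s, x)) = fun s => ‖pdx g (s, x)‖⁻¹ • pdx g (s, x) := rfl
  rw [hfun2]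
  convert hfinal using 1
  show adx g (pdt g) (t, x) - ⟪adx g (pdt g) (t, x), tg g (t, x)⟫ • tg g (t, x) = _
  rw [adx_pdt_eq hg, tg_eq]
  rw [← hW', ← hv, ← hr]
  rw [real_inner_smul_left, real_inner_smul_right]
  match_scalars <;> first
    | ring
    | (field_simp; ring)

end StepA
section PiAlg

theorem pi_alg {E : Type*} [NormedAddCommGroup E] [InnerProductSpace ℝ E]
    (T k0 D0 D2 : E) (r lam : ℝ) (hT : ⟪k0, T⟫ = 0) (hT' : ⟪T, k0⟫ = 0) :
    (r • (-((2:ℝ) • D2 + (⟪k0, k0⟫ • D0 + (⟪k0, D0⟫ + ⟪D0, k0⟫) • k0)) + lam • D0)) -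
      ⟪r • (-((2:ℝ) • D2 + (⟪k0, k0⟫ • D0 + (⟪k0, D0⟫ + ⟪D0, k0⟫) • k0)) + lam • D0), T⟫ • T
    = -((2:ℝ) • ((r • D2) - ⟪r • D2, T⟫ • T))
      - (2 * ⟪(r • D0) - ⟪r • D0, T⟫ • T, k0⟫) • k0
      - ⟪k0, k0⟫ • ((r • D0) - ⟪r • D0, T⟫ • T)
      + lam • ((r • D0) - ⟪r • D0, T⟫ • T) := by
  simp only [inner_add_left, inner_smul_left, inner_neg_left, inner_sub_left,
    RCLike.ofReal_real_eq_id, id_eq, conj_trivial, hT, hT', real_inner_comm k0 D0]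
  simp only [mul_zero, add_zero, zero_add, sub_zero, mul_comm]
  module

end PiAlg
section StepC

variable {n : ℕ} {γ : ℝ → ℝ → EuclideanSpace ℝ (Fin n)}

theorem gradElE_bridge (hg : ContDiff ℝ (⊤ : ℕ∞) (fun p : ℝ × ℝ => γ p.1 p.2)) {t y : ℝ}
    (hp : pdx (fun p : ℝ × ℝ => γ p.1 p.2) (t, y) ≠ 0) :
    gradElE (γ t) y = (2:ℝ) • kk (fun p : ℝ × ℝ => γ p.1 p.2) 2 (t, y)
      + ⟪kk (fun p : ℝ × ℝ => γ p.1 p.2) 0 (t, y), kk (fun p : ℝ × ℝ => γ p.1 p.2) 0 (t, y)⟫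
        • kk (fun p : ℝ × ℝ => γ p.1 p.2) 0 (t, y) := by
  show (2:ℝ) • aderivPIter (γ t) 2 (curvV (γ t)) y + ‖curvV (γ t) y‖ ^ 2 • curvV (γ t) y = _
  rw [bridge_kk hg 2 t y hp, bridge_curv hg hp, real_inner_self_eq_norm_sq]

theorem stepC (hg : ContDiff ℝ (⊤ : ℕ∞) (fun p : ℝ × ℝ => γ p.1 p.2))
    {t₀ x₀ : ℝ} (hx₀ : x₀ ∈ Icc (-1:ℝ) 1)
    (hne : ∀ y ∈ Icc (-1:ℝ) 1, pdx (fun p : ℝ × ℝ => γ p.1 p.2) (t₀, y) ≠ 0)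
    (hfeq : ∀ y ∈ Icc (-1:ℝ) 1,
      timeD γ t₀ y = -(gradElE (γ t₀) y - lagMul (γ t₀) • curvV (γ t₀) y)) :
    np (fun p : ℝ × ℝ => γ p.1 p.2) (adx (fun p : ℝ × ℝ => γ p.1 p.2)
        (pdt (fun p : ℝ × ℝ => γ p.1 p.2))) (t₀, x₀)
    = -((2:ℝ) • kk (fun p : ℝ × ℝ => γ p.1 p.2) 3 (t₀, x₀))
      - (2 * ⟪kk (fun p : ℝ × ℝ => γ p.1 p.2) 1 (t₀, x₀),
            kk (fun p : ℝ × ℝ => γ p.1 p.2) 0 (t₀, x₀)⟫)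
          • kk (fun p : ℝ × ℝ => γ p.1 p.2) 0 (t₀, x₀)
      - ⟪kk (fun p : ℝ × ℝ => γ p.1 p.2) 0 (t₀, x₀),
            kk (fun p : ℝ × ℝ => γ p.1 p.2) 0 (t₀, x₀)⟫
          • kk (fun p : ℝ × ℝ => γ p.1 p.2) 1 (t₀, x₀)
      + lagMul (γ t₀) • kk (fun p : ℝ × ℝ => γ p.1 p.2) 1 (t₀, x₀) := by
  set g : ℝ × ℝ → EuclideanSpace ℝ (Fin n) := fun p => γ p.1 p.2 with hgdef
  have hp : pdx g (t₀, x₀) ≠ 0 := hne x₀ hx₀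
  set lam := lagMul (γ t₀) with hlam
  -- flow equation in joint coordinates, on Icc
  have hVR : ∀ y ∈ Icc (-1:ℝ) 1,
      pdt g (t₀, y) = -((2:ℝ) • kk g 2 (t₀, y)
          + ⟪kk g 0 (t₀, y), kk g 0 (t₀, y)⟫ • kk g 0 (t₀, y)) + lam • kk g 0 (t₀, y) := by
    intro y hy
    rw [← timeD_eq_pdt hg t₀ y, hfeq y hy, gradElE_bridge hg (hne y hy),
      bridge_curv hg (hne y hy)]
    module
  -- derivative of the kk-expression
  have hk0 : HasDerivAt (fun y => kk g 0 (t₀, y)) (fderiv ℝ (kk g 0) (t₀, x₀) (0, 1)) x₀ :=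
    hasDerivAt_sliceX (kk g 0) ((contDiffAt_kk hg 0 hp).differentiableAt (by simp))
  have hk2 : HasDerivAt (fun y => kk g 2 (t₀, y)) (fderiv ℝ (kk g 2) (t₀, x₀) (0, 1)) x₀ :=
    hasDerivAt_sliceX (kk g 2) ((contDiffAt_kk hg 2 hp).differentiableAt (by simp))
  set D0 := fderiv ℝ (kk g 0) (t₀, x₀) (0, 1) with hD0
  set D2 := fderiv ℝ (kk g 2) (t₀, x₀) (0, 1) with hD2
  set k0 := kk g 0 (t₀, x₀) with hk0def
  set DR := -((2:ℝ) • D2 + (⟪k0, k0⟫ • D0 + (⟪k0, D0⟫ + ⟪D0, k0⟫) • k0)) + lam • D0 with hDR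
  have hinner : HasDerivAt (fun y => ⟪kk g 0 (t₀, y), kk g 0 (t₀, y)⟫)
      (⟪k0, D0⟫ + ⟪D0, k0⟫) x₀ := hk0.inner ℝ hk0
  have hR : HasDerivAt (fun y => -((2:ℝ) • kk g 2 (t₀, y)
      + ⟪kk g 0 (t₀, y), kk g 0 (t₀, y)⟫ • kk g 0 (t₀, y)) + lam • kk g 0 (t₀, y)) DR x₀ :=
    ((hk2.const_smul (2:ℝ)).add (hinner.smul hk0)).neg.add (hk0.const_smul lam)
  -- uniqueness of the spatial derivative on Icc at the endpoint
  have hVs : HasDerivAt (fun y => pdt g (t₀, y)) (fderiv ℝ (pdt g) (t₀, x₀) (0, 1)) x₀ :=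
    hasDerivAt_sliceX (pdt g) ((contDiff_pdt hg).differentiable (by simp)).differentiableAt
  have huniq : UniqueDiffWithinAt ℝ (Icc (-1:ℝ) 1) x₀ :=
    (uniqueDiffOn_Icc (by norm_num : (-1:ℝ) < 1)) x₀ hx₀
  have h2' : HasDerivWithinAt (fun y => pdt g (t₀, y)) DR (Icc (-1:ℝ) 1) x₀ :=
    (hR.hasDerivWithinAt).congr (fun y hy => hVR y hy) (hVR x₀ hx₀)
  have hder : fderiv ℝ (pdt g) (t₀, x₀) (0, 1) = DR := by
    rw [← (hVs.hasDerivWithinAt (s := Icc (-1:ℝ) 1)).derivWithin huniq,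
      ← h2'.derivWithin huniq]
  -- assemble
  have hadx : adx g (pdt g) (t₀, x₀) = ‖pdx g (t₀, x₀)‖⁻¹ • DR := by
    show ‖pdx g (t₀, x₀)‖⁻¹ • fderiv ℝ (pdt g) (t₀, x₀) (0, 1) = _
    rw [hder]
  have hT0 : ⟪k0, tg g (t₀, x₀)⟫ = 0 := inner_kk0_tg hg hp
  have hT0' : ⟪tg g (t₀, x₀), k0⟫ = 0 := by rw [real_inner_comm]; exact hT0
  show adx g (pdt g) (t₀, x₀)
      - ⟪adx g (pdt g) (t₀, x₀), tg g (t₀, x₀)⟫ • tg g (t₀, x₀) = _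
  rw [hadx]
  exact pi_alg (tg g (t₀, x₀)) k0 D0 D2 (‖pdx g (t₀, x₀)‖⁻¹) lam hT0 hT0'

end StepC
section Interior

variable {n : ℕ}

theorem interior_case (T : ℝ)
    (ξ : EuclideanSpace ℝ (Fin n) → EuclideanSpace ℝ (Fin n))
    (hξ : ContDiff ℝ (⊤ : ℕ∞) ξ) (τ : ℝ → ℝ)
    (γ : ℝ → ℝ → EuclideanSpace ℝ (Fin n)) (hflow : IsFLFBEF T ξ τ γ)
    {t₀ x₀ : ℝ} (ht₀ : t₀ ∈ Ioo (0:ℝ) T) (hx₀ : x₀ ∈ ({-1, 1} : Set ℝ)) :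
    aderivPIter (γ t₀) 3 (curvV (γ t₀)) x₀
      + τ x₀ • shapeOp ξ (γ t₀ x₀) (aderivPIter (γ t₀) 2 (curvV (γ t₀)) x₀)
      + ⟪curvV (γ t₀) x₀, aderivP (γ t₀) (curvV (γ t₀)) x₀⟫ • curvV (γ t₀) x₀ = 0 := by
  obtain ⟨hg, hder, hE, hfl, hbc⟩ := hflow
  set g : ℝ × ℝ → EuclideanSpace ℝ (Fin n) := fun p => γ p.1 p.2 with hgdef
  have hx₀Icc : x₀ ∈ Icc (-1:ℝ) 1 := by
    rcases hx₀ with h | h <;> simp_all <;> norm_num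
  have ht₀Ico : t₀ ∈ Ico (0:ℝ) T := ⟨le_of_lt ht₀.1, ht₀.2⟩
  have hne : ∀ y ∈ Icc (-1:ℝ) 1, pdx g (t₀, y) ≠ 0 := by
    intro y hy
    rw [← deriv_eq_pdx hg]
    exact hder t₀ ht₀Ico y hy
  have hp : pdx g (t₀, x₀) ≠ 0 := hne x₀ hx₀Icc
  -- Step B : time derivative of the tangent via the boundary condition
  have hgd : HasDerivAt (fun s => g (s, x₀)) (pdt g (t₀, x₀)) t₀ :=
    hasDerivAt_sliceT g (hg.differentiable (by simp)).differentiableAt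
  have hchain : HasDerivAt (fun s => ξ (g (s, x₀)))
      (fderiv ℝ ξ (g (t₀, x₀)) (pdt g (t₀, x₀))) t₀ :=
    ((hξ.differentiable (by simp) (g (t₀, x₀))).hasFDerivAt.comp_hasDerivAt t₀ hgd :
      HasDerivAt (ξ ∘ fun s => g (s, x₀)) _ t₀)
  have hev : (fun s => tg g (s, x₀)) =ᶠ[nhds t₀] (fun s => τ x₀ • ξ (g (s, x₀))) := by
    filter_upwards [isOpen_Ioo.mem_nhds ht₀] with s hs
    rw [← utang_eq_tg hg]
    exact (hbc s ⟨le_of_lt hs.1, hs.2⟩ x₀ hx₀).2.1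
  have hB : HasDerivAt (fun s => tg g (s, x₀))
      (τ x₀ • fderiv ℝ ξ (g (t₀, x₀)) (pdt g (t₀, x₀))) t₀ :=
    (hchain.const_smul (τ x₀)).congr_of_eventuallyEq hev
  have hA : HasDerivAt (fun s => tg g (s, x₀)) (np g (adx g (pdt g)) (t₀, x₀)) t₀ :=
    hasDerivAt_tg_sliceT hg hp
  have hAB : np g (adx g (pdt g)) (t₀, x₀)
      = τ x₀ • fderiv ℝ ξ (g (t₀, x₀)) (pdt g (t₀, x₀)) := hA.unique hB
  -- Step C
  have hfeq : ∀ y ∈ Icc (-1:ℝ) 1,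
      timeD γ t₀ y = -(gradElE (γ t₀) y - lagMul (γ t₀) • curvV (γ t₀) y) :=
    fun y hy => hfl t₀ ht₀Ico y hy
  have hC := stepC hg hx₀Icc hne hfeq
  set lam := lagMul (γ t₀) with hlam
  set k0 := kk g 0 (t₀, x₀) with hk0
  set k1 := kk g 1 (t₀, x₀) with hk1
  set k2 := kk g 2 (t₀, x₀) with hk2
  set k3 := kk g 3 (t₀, x₀) with hk3
  set c := (⟪k0, k0⟫ : ℝ) with hc
  -- value of ∂ₜγ at the boundary point
  have hV0 : pdt g (t₀, x₀) = -((2:ℝ) • k2 + c • k0) + lam • k0 := by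
    rw [← timeD_eq_pdt hg t₀ x₀, hfeq x₀ hx₀Icc, gradElE_bridge hg hp, bridge_curv hg hp]
    module
  have eqStar : τ x₀ • fderiv ℝ ξ (g (t₀, x₀)) (-((2:ℝ) • k2 + c • k0) + lam • k0)
      = -((2:ℝ) • k3) - (2 * ⟪k1, k0⟫) • k0 - c • k1 + lam • k1 := by
    rw [← hV0]
    exact hAB.symm.trans hC
  have hmap : fderiv ℝ ξ (g (t₀, x₀)) (-((2:ℝ) • k2 + c • k0) + lam • k0)
      = -((2:ℝ) • fderiv ℝ ξ (g (t₀, x₀)) k2 + c • fderiv ℝ ξ (g (t₀, x₀)) k0)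
        + lam • fderiv ℝ ξ (g (t₀, x₀)) k0 := by
    simp [map_add, map_neg, _root_.map_smul]
  rw [hmap] at eqStar
  -- Step D : first-order boundary condition
  have hD : k1 = τ x₀ • fderiv ℝ ξ (g (t₀, x₀)) k0 := by
    have hb1 : aderivP (γ t₀) (curvV (γ t₀)) x₀ = k1 := by
      have h := bridge_kk hg 1 t₀ x₀ hp
      simpa [aderivPIter] using h
    have hbc4 := (hbc t₀ ht₀Ico x₀ hx₀).2.2.2
    rw [hb1, bridge_curv hg hp] at hbc4
    rw [hbc4]
    show -(τ x₀ • -(fderiv ℝ ξ (g (t₀, x₀)) k0)) = _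
    rw [smul_neg, neg_neg]
  -- rewrite the goal through the bridges
  rw [bridge_kk hg 3 t₀ x₀ hp, bridge_kk hg 2 t₀ x₀ hp, bridge_curv hg hp]
  have hb1 : aderivP (γ t₀) (curvV (γ t₀)) x₀ = k1 := by
    have h := bridge_kk hg 1 t₀ x₀ hp
    simpa [aderivPIter] using h
  rw [hb1]
  show k3 + τ x₀ • -(fderiv ℝ ξ (g (t₀, x₀)) k2) + ⟪k0, k1⟫ • k0 = 0
  rw [real_inner_comm k1 k0, smul_neg]
  linear_combination (norm := module) ((1:ℝ)/2) • eqStar + ((lam - c)/2) • hD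

end Interior
end S6Aux

/-- third-order boundary identity along a FLFB-EF (Lemma 2.8). -/
theorem statement6
    (n : ℕ) (hn : 2 ≤ n) (T : ℝ) (hT : 0 < T)
    (ξ : EuclideanSpace ℝ (Fin n) → EuclideanSpace ℝ (Fin n))
    (hξ : ContDiff ℝ (⊤ : ℕ∞) ξ)
    (hsym : ∀ p v w : EuclideanSpace ℝ (Fin n),
      ⟪fderiv ℝ ξ p v, w⟫ = ⟪v, fderiv ℝ ξ p w⟫)
    (hbd : ∀ k : ℕ, ∃ Ck : ℝ, ∀ p, ‖iteratedFDeriv ℝ k ξ p‖ ≤ Ck)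
    (τ : ℝ → ℝ) (hτ : ∀ x ∈ ({-1, 1} : Set ℝ), τ x = 1 ∨ τ x = -1)
    (γ : ℝ → ℝ → EuclideanSpace ℝ (Fin n))
    (hflow : IsFLFBEF T ξ τ γ) :
    ∀ t ∈ Ico (0:ℝ) T, ∀ x ∈ ({-1, 1} : Set ℝ),
      aderivPIter (γ t) 3 (curvV (γ t)) x
        + τ x • shapeOp ξ (γ t x) (aderivPIter (γ t) 2 (curvV (γ t)) x)
        + ⟪curvV (γ t) x, aderivP (γ t) (curvV (γ t)) x⟫ • curvV (γ t) x = 0 := by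
  intro t ht x hx
  rcases eq_or_lt_of_le ht.1 with h0 | hpos
  case inr => exact S6Aux.interior_case T ξ hξ τ γ hflow ⟨hpos, ht.2⟩ hx
  -- boundary case t = 0 : by continuity from the interior identity
  case inl =>
    subst h0
    open S6Aux in
    have hg : ContDiff ℝ (⊤ : ℕ∞) (fun p : ℝ × ℝ => γ p.1 p.2) := hflow.1
    set g : ℝ × ℝ → EuclideanSpace ℝ (Fin n) := fun p => γ p.1 p.2 with hgdef
    have hder := hflow.2.1
    have hxIcc : x ∈ Icc (-1:ℝ) 1 := by
      rcases hx with h | h <;> simp_all <;> norm_num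
    have hp : pdx g (0, x) ≠ 0 := by
      rw [← deriv_eq_pdx hg]
      exact hder 0 ⟨le_refl 0, hT⟩ x hxIcc
    set Φ : ℝ → EuclideanSpace ℝ (Fin n) := fun s =>
      kk g 3 (s, x) + τ x • -(fderiv ℝ ξ (g (s, x)) (kk g 2 (s, x)))
        + ⟪kk g 0 (s, x), kk g 1 (s, x)⟫ • kk g 0 (s, x) with hΦdef
    have hslC : ContDiffAt ℝ (⊤ : ℕ∞) (fun s : ℝ => ((s, x) : ℝ × ℝ)) 0 :=
      (contDiff_id.prodMk contDiff_const).contDiffAt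
    have hkcd : ∀ i : ℕ, ContDiffAt ℝ (⊤ : ℕ∞) (fun s => kk g i (s, x)) 0 := fun i =>
      ContDiffAt.comp 0 (contDiffAt_kk hg i hp) hslC
    have hkc : ∀ i : ℕ, ContinuousAt (fun s => kk g i (s, x)) 0 := fun i =>
      (hkcd i).continuousAt
    have hgsl : ContDiffAt ℝ (⊤ : ℕ∞) (fun s => g (s, x)) 0 :=
      ContDiffAt.comp 0 hg.contDiffAt hslC
    have hfd : ContDiff ℝ (⊤ : ℕ∞) (fderiv ℝ ξ) := hξ.fderiv_right (by simp)
    have hterm : ContDiffAt ℝ (⊤ : ℕ∞) (fun s => fderiv ℝ ξ (g (s, x)) (kk g 2 (s, x))) 0 :=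
      (ContDiffAt.comp 0 hfd.contDiffAt hgsl).clm_apply (hkcd 2)
    have hΦcont : ContinuousAt Φ 0 := by
      refine ((hkc 3).add (((hterm.continuousAt.neg).const_smul (τ x)))).add ?_
      exact ContinuousAt.smul (f := fun s => ⟪kk g 0 (s, x), kk g 1 (s, x)⟫) ((hkc 0).inner (hkc 1)) (hkc 0)
    have hzero : ∀ᶠ s in nhdsWithin (0:ℝ) (Ioi 0), Φ s = 0 := by
      filter_upwards [Ioo_mem_nhdsGT_of_mem (⟨le_refl 0, hT⟩ : (0:ℝ) ∈ Ico 0 T)] with s hs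
      have hint := S6Aux.interior_case T ξ hξ τ γ hflow hs hx
      have hps : pdx g (s, x) ≠ 0 := by
        rw [← deriv_eq_pdx hg]
        exact hder s ⟨le_of_lt hs.1, hs.2⟩ x hxIcc
      have hb1 : aderivP (γ s) (curvV (γ s)) x = kk g 1 (s, x) := by
        have h := bridge_kk hg 1 s x hps
        simpa [aderivPIter] using h
      rw [bridge_kk hg 3 s x hps, bridge_kk hg 2 s x hps, bridge_curv hg hps, hb1] at hint
      exact hint
    have htend1 : Filter.Tendsto Φ (nhdsWithin (0:ℝ) (Ioi 0)) (nhds (Φ 0)) :=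
      (hΦcont.tendsto).mono_left nhdsWithin_le_nhds
    have htend2 : Filter.Tendsto Φ (nhdsWithin (0:ℝ) (Ioi 0)) (nhds 0) :=
      Filter.Tendsto.congr' (hzero.mono fun s hs => hs.symm) tendsto_const_nhds
    have hΦ0 : Φ 0 = 0 := tendsto_nhds_unique htend1 htend2
    have hb1 : aderivP (γ 0) (curvV (γ 0)) x = kk g 1 (0, x) := by
      have h := bridge_kk hg 1 0 x hp
      simpa [aderivPIter] using h
    rw [bridge_kk hg 3 0 x hp, bridge_kk hg 2 0 x hp, bridge_curv hg hp, hb1]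
    exact hΦ0

end
end

section
/- For every A > 0 there exists a function C: ℕ → (0,∞) such that: for all a_{−1}, a_{1} ∈ ℝ with |a_{−1}| ≤ A and |a_{1}| ≤ A, there exists a smooth diffeomorphism θ: [-1,1] → [-1,1] satisfying 1/2 ≤ θ' ≤ 3/2 on [-1,1], θ(±1) = ±1, θ'(±1) = 1, θ''(±1) = 0, θ'''(±1) = a_{±1}, and sup_{x∈[-1,1]} |θ^{(k)}(x)| ≤ C(k) for all k ∈ ℕ. -/
open Set MeasureTheory Filter
open scoped RealInnerProductSpace

noncomputable section

variable {n : ℕ}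

private def myBump : ContDiffBump (0:ℝ) := ⟨1, 2, one_pos, one_lt_two⟩

private def hfun : ℝ → ℝ := fun x => x ^ 3 / 6 * myBump x

private lemma hfun_contDiff : ContDiff ℝ (⊤:ℕ∞) hfun :=
  ((contDiff_id.pow 3).div_const 6).mul myBump.contDiff

private lemma hfun_cube : hfun =ᶠ[nhds (0:ℝ)] fun x => x ^ 3 / 6 := by
  filter_upwards [myBump.eventuallyEq_one] with x hx
  simp [hfun, hx]

private lemma hfun_zero {x : ℝ} (hx : 2 ≤ |x|) : hfun x = 0 := by
  have : myBump x = 0 := myBump.zero_of_le_dist (by simpa [Real.dist_eq, myBump] using hx)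
  simp [hfun, this]

private lemma hfun_support : HasCompactSupport hfun := by
  apply HasCompactSupport.intro (isCompact_Icc (a := (-2:ℝ)) (b := 2))
  intro x hx
  simp only [mem_Icc, not_and_or, not_le] at hx
  exact hfun_zero (by cases hx with
    | inl h => rw [abs_of_neg (by linarith)]; linarith
    | inr h => rw [abs_of_pos (by linarith)]; linarith)

private lemma iteratedDeriv_const_zero' (k : ℕ) :
    iteratedDeriv k (fun _ : ℝ => (0:ℝ)) = fun _ => 0 := by
  induction k with
  | zero => simp [iteratedDeriv_zero]
  | succ n ih => rw [iteratedDeriv_succ', deriv_const']; exact ih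

private lemma hfun_iter_zero (k : ℕ) {u : ℝ} (hu : 2 < |u|) : iteratedDeriv k hfun u = 0 := by
  have hev : hfun =ᶠ[nhds u] fun _ => (0:ℝ) := by
    have hopen : IsOpen {x : ℝ | 2 < |x|} := isOpen_lt continuous_const continuous_abs
    filter_upwards [hopen.mem_nhds hu] with y hy
    exact hfun_zero (le_of_lt hy)
  rw [hev.iteratedDeriv_eq, iteratedDeriv_const_zero']

private lemma hfun_bound (k : ℕ) : ∃ M : ℝ, 0 < M ∧ ∀ x, |iteratedDeriv k hfun x| ≤ M := by
  have h1 : HasCompactSupport (iteratedDeriv k hfun) := by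
    have h := hfun_support.iteratedFDeriv (𝕜 := ℝ) k
    have heq : iteratedDeriv k hfun =
        (fun L : (ℝ [×k]→L[ℝ] ℝ) => L (fun _ => 1)) ∘ iteratedFDeriv ℝ k hfun := by
      funext x; exact iteratedDeriv_eq_iteratedFDeriv
    rw [heq]
    exact h.comp_left (by simp)
  have h2 : Continuous (iteratedDeriv k hfun) :=
    hfun_contDiff.continuous_iteratedDeriv k (by exact_mod_cast le_top)
  obtain ⟨M, hM⟩ := h2.bounded_above_of_compact_support h1
  exact ⟨max M 1, lt_of_lt_of_le one_pos (le_max_right _ _),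
    fun x => le_trans (by simpa using hM x) (le_max_left _ _)⟩

private lemma iteratedDeriv_add' {k : ℕ} {f g : ℝ → ℝ} (hf : ContDiff ℝ (⊤:ℕ∞) f)
    (hg : ContDiff ℝ (⊤:ℕ∞) g) (x : ℝ) :
    iteratedDeriv k (fun y => f y + g y) x = iteratedDeriv k f x + iteratedDeriv k g x := by
  simp only [← iteratedDerivWithin_univ]
  exact iteratedDerivWithin_add (Set.mem_univ x) uniqueDiffOn_univ
    (hf.of_le (by exact_mod_cast le_top)).contDiffWithinAt (hg.of_le (by exact_mod_cast le_top)).contDiffWithinAt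

private lemma iteratedDeriv_cmul {k : ℕ} (c : ℝ) {f : ℝ → ℝ} (hf : ContDiff ℝ (⊤:ℕ∞) f) (x : ℝ) :
    iteratedDeriv k (fun y => c * f y) x = c * iteratedDeriv k f x := by
  simp only [← iteratedDerivWithin_univ]
  exact iteratedDerivWithin_const_mul (Set.mem_univ x) uniqueDiffOn_univ c
    (hf.of_le (by exact_mod_cast le_top)).contDiffWithinAt

private lemma iteratedDeriv_id_eval (k : ℕ) (x : ℝ) :
    iteratedDeriv k (fun y : ℝ => y) x = if k = 0 then x else if k = 1 then 1 else 0 := by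
  match k with
  | 0 => simp [iteratedDeriv_zero]
  | 1 => simp [iteratedDeriv_one]
  | (n+2) =>
    have h1 : deriv (fun y : ℝ => y) = fun _ => (1:ℝ) := by funext y; simp
    rw [iteratedDeriv_succ', h1]
    have h2 : iteratedDeriv (n+1) (fun _ : ℝ => (1:ℝ)) = fun _ => 0 := by
      rw [iteratedDeriv_succ', deriv_const']
      induction n with
      | zero => simp [iteratedDeriv_zero]
      | succ m ih => rw [iteratedDeriv_succ', deriv_const']; exact ih
    simp [h2]

private lemma cubic_d1 : deriv (fun x : ℝ => x ^ 3 / 6) = fun x => x ^ 2 / 2 := by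
  funext x
  rw [deriv_div_const, deriv_pow_field]
  ring

private lemma cubic_iter :
    iteratedDeriv 1 (fun x : ℝ => x ^ 3 / 6) 0 = 0 ∧
    iteratedDeriv 2 (fun x : ℝ => x ^ 3 / 6) 0 = 0 ∧
    iteratedDeriv 3 (fun x : ℝ => x ^ 3 / 6) 0 = 1 := by
  have h2 : deriv (fun x : ℝ => x ^ 2 / 2) = fun x => x := by
    funext x; rw [deriv_div_const, deriv_pow_field]; ring
  have h3 : deriv (fun x : ℝ => x) = fun _ : ℝ => (1:ℝ) := by funext x; simp
  refine ⟨?_, ?_, ?_⟩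
  · rw [iteratedDeriv_one, cubic_d1]; norm_num
  · rw [show (2:ℕ) = 1 + 1 from rfl, iteratedDeriv_succ', cubic_d1, iteratedDeriv_one, h2]
  · rw [show (3:ℕ) = 1 + 1 + 1 from rfl, iteratedDeriv_succ', cubic_d1,
      iteratedDeriv_succ', h2, iteratedDeriv_one, h3]


/-- construction of boundary-adapted diffeomorphisms (Lemma 3.4). -/
theorem statement7 (A : ℝ) (hA : 0 < A) :
    ∃ C : ℕ → ℝ, (∀ k, 0 < C k) ∧
      ∀ am ap : ℝ, |am| ≤ A → |ap| ≤ A →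
        ∃ θ : ℝ → ℝ,
          ContDiff ℝ (⊤ : ℕ∞) θ ∧
          Set.BijOn θ (Icc (-1:ℝ) 1) (Icc (-1:ℝ) 1) ∧
          (∀ x ∈ Icc (-1:ℝ) 1, 1/2 ≤ deriv θ x ∧ deriv θ x ≤ 3/2) ∧
          θ (-1) = -1 ∧ θ 1 = 1 ∧
          deriv θ (-1) = 1 ∧ deriv θ 1 = 1 ∧
          iteratedDeriv 2 θ (-1) = 0 ∧ iteratedDeriv 2 θ 1 = 0 ∧
          iteratedDeriv 3 θ (-1) = am ∧ iteratedDeriv 3 θ 1 = ap ∧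
          (∀ k : ℕ, ∀ x ∈ Icc (-1:ℝ) 1, |iteratedDeriv k θ x| ≤ C k) := by
  choose M hMpos hMbd using hfun_bound
  set l : ℝ := max 4 (Real.sqrt (4*A*(M 1))) with hl_def
  have hl4 : (4:ℝ) ≤ l := le_max_left _ _
  have hl0 : (0:ℝ) < l := by linarith
  have hl1 : (1:ℝ) ≤ l := by linarith
  have hlsq : 4*A*(M 1) ≤ l^2 := by
    have h1 : Real.sqrt (4*A*(M 1)) ≤ l := le_max_right _ _
    have h2 : (0:ℝ) ≤ 4*A*(M 1) := mul_nonneg (by nlinarith) (hMpos 1).le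
    nlinarith [Real.sq_sqrt h2, Real.sqrt_nonneg (4*A*(M 1))]
  refine ⟨fun k => 1 + 2*A*l^k*(M k), fun k => ?_, ?_⟩
  · show (0:ℝ) < 1 + 2*A*l^k*(M k)
    have := mul_nonneg (mul_nonneg (mul_nonneg (by norm_num : (0:ℝ) ≤ 2) hA.le)
      (pow_nonneg hl0.le k)) (hMpos k).le
    linarith
  intro am ap ham hap
  set H : ℝ → ℝ := fun u => (l^3)⁻¹ * hfun (l * u) with hH_def
  have hcomp : ContDiff ℝ (⊤:ℕ∞) (fun u : ℝ => hfun (l*u)) :=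
    hfun_contDiff.comp (contDiff_const.mul contDiff_id)
  have hHsm : ContDiff ℝ (⊤:ℕ∞) H := contDiff_const.mul hcomp
  set θ : ℝ → ℝ := fun y => y + (am * H (y + 1) + ap * H (y + (-1))) with hθ_def
  have hid : ContDiff ℝ (⊤:ℕ∞) (fun y : ℝ => y) := contDiff_id
  have hs1 : ContDiff ℝ (⊤:ℕ∞) (fun y : ℝ => H (y + 1)) :=
    hHsm.comp (contDiff_id.add contDiff_const)
  have hs2 : ContDiff ℝ (⊤:ℕ∞) (fun y : ℝ => H (y + (-1))) :=
    hHsm.comp (contDiff_id.add contDiff_const)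
  have ht1 : ContDiff ℝ (⊤:ℕ∞) (fun y : ℝ => am * H (y + 1)) := contDiff_const.mul hs1
  have ht2 : ContDiff ℝ (⊤:ℕ∞) (fun y : ℝ => ap * H (y + (-1))) := contDiff_const.mul hs2
  have hrest : ContDiff ℝ (⊤:ℕ∞) (fun y : ℝ => am * H (y + 1) + ap * H (y + (-1))) :=
    ht1.add ht2
  have hθsm : ContDiff ℝ (⊤:ℕ∞) θ := hid.add hrest
  -- master decomposition
  have hshift : ∀ (k : ℕ) (s x : ℝ), iteratedDeriv k (fun y : ℝ => H (y + s)) x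
      = (l^3)⁻¹ * (l^k * iteratedDeriv k hfun (l*(x+s))) := by
    intro k s x
    rw [iteratedDeriv_comp_add_const k H s]
    show iteratedDeriv k H (x + s) = _
    rw [hH_def]
    have h1 : iteratedDeriv k (fun u : ℝ => (l^3)⁻¹ * hfun (l*u)) (x+s)
        = (l^3)⁻¹ * iteratedDeriv k (fun u : ℝ => hfun (l*u)) (x+s) :=
      iteratedDeriv_cmul _ hcomp _
    rw [h1]
    congr 1
    rw [iteratedDeriv_comp_const_mul (n := k) (hfun_contDiff.of_le (by exact_mod_cast le_top)) l]
  have key : ∀ (k : ℕ) (x : ℝ), iteratedDeriv k θ x =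
      iteratedDeriv k (fun y : ℝ => y) x
      + (am * ((l^3)⁻¹ * (l^k * iteratedDeriv k hfun (l*(x+1))))
        + ap * ((l^3)⁻¹ * (l^k * iteratedDeriv k hfun (l*(x+(-1)))))) := by
    intro k x
    have e1 : iteratedDeriv k θ x = iteratedDeriv k (fun y : ℝ => y) x
        + iteratedDeriv k (fun y : ℝ => am * H (y + 1) + ap * H (y + (-1))) x :=
      iteratedDeriv_add' hid hrest x
    have e2 : iteratedDeriv k (fun y : ℝ => am * H (y + 1) + ap * H (y + (-1))) x
        = iteratedDeriv k (fun y : ℝ => am * H (y + 1)) x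
          + iteratedDeriv k (fun y : ℝ => ap * H (y + (-1))) x :=
      iteratedDeriv_add' ht1 ht2 x
    have e3 : iteratedDeriv k (fun y : ℝ => am * H (y + 1)) x
        = am * iteratedDeriv k (fun y : ℝ => H (y + 1)) x := iteratedDeriv_cmul am hs1 x
    have e4 : iteratedDeriv k (fun y : ℝ => ap * H (y + (-1))) x
        = ap * iteratedDeriv k (fun y : ℝ => H (y + (-1))) x := iteratedDeriv_cmul ap hs2 x
    rw [e1, e2, e3, e4, hshift k 1 x, hshift k (-1) x]
  -- values of hfun derivatives at relevant points
  have hfun0 : hfun 0 = 0 := by simp [hfun]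
  have hc := cubic_iter
  have hev : ∀ k : ℕ, iteratedDeriv k hfun 0 = iteratedDeriv k (fun x : ℝ => x^3/6) 0 :=
    fun k => hfun_cube.iteratedDeriv_eq k
  have hfar : ∀ (k : ℕ) (c : ℝ), 2 ≤ |c| → iteratedDeriv k hfun (l * c) = 0 := by
    intro k c hc2
    apply hfun_iter_zero
    rw [abs_mul, abs_of_pos hl0]
    nlinarith [abs_nonneg c]
  have hln3 : (l:ℝ)^3 ≠ 0 := by positivity
  -- endpoint argument simplifications
  have ea1 : l * ((-1:ℝ) + 1) = 0 := by ring
  have ea2 : (l : ℝ) * ((1:ℝ) + 1) = l * 2 := by ring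
  have ea3 : (l : ℝ) * ((-1:ℝ) + (-1)) = l * (-2) := by ring
  have ea4 : (l : ℝ) * ((1:ℝ) + (-1)) = 0 := by ring
  have hfar2 : ∀ k : ℕ, iteratedDeriv k hfun (l * ((1:ℝ) + 1)) = 0 := by
    intro k; rw [ea2]; exact hfar k 2 (by norm_num)
  have hfar3 : ∀ k : ℕ, iteratedDeriv k hfun (l * ((-1:ℝ) + (-1))) = 0 := by
    intro k; rw [ea3]; exact hfar k (-2) (by norm_num)
  -- θ endpoint values
  have hval_m : θ (-1) = -1 := by
    have h0 := key 0 (-1)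
    rw [iteratedDeriv_zero] at h0
    rw [h0, iteratedDeriv_id_eval, hfar3 0, ea1]
    rw [show iteratedDeriv 0 hfun 0 = hfun 0 by rw [iteratedDeriv_zero], hfun0]
    norm_num
  have hval_p : θ 1 = 1 := by
    have h0 := key 0 1
    rw [iteratedDeriv_zero] at h0
    rw [h0, iteratedDeriv_id_eval, hfar2 0, ea4]
    rw [show iteratedDeriv 0 hfun 0 = hfun 0 by rw [iteratedDeriv_zero], hfun0]
    norm_num
  have hderiv_eq : ∀ x : ℝ, deriv θ x = iteratedDeriv 1 θ x :=
    fun x => (congrFun iteratedDeriv_one x).symm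
  have hder_m : deriv θ (-1) = 1 := by
    rw [hderiv_eq, key 1 (-1), iteratedDeriv_id_eval, hfar3 1, ea1, hev 1, hc.1]
    norm_num
  have hder_p : deriv θ 1 = 1 := by
    rw [hderiv_eq, key 1 1, iteratedDeriv_id_eval, hfar2 1, ea4, hev 1, hc.1]
    norm_num
  have h2_m : iteratedDeriv 2 θ (-1) = 0 := by
    rw [key 2 (-1), iteratedDeriv_id_eval, hfar3 2, ea1, hev 2, hc.2.1]
    norm_num
  have h2_p : iteratedDeriv 2 θ 1 = 0 := by
    rw [key 2 1, iteratedDeriv_id_eval, hfar2 2, ea4, hev 2, hc.2.1]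
    norm_num
  have h3_m : iteratedDeriv 3 θ (-1) = am := by
    rw [key 3 (-1), iteratedDeriv_id_eval, hfar3 3, ea1, hev 3, hc.2.2]
    field_simp
    norm_num
  have h3_p : iteratedDeriv 3 θ 1 = ap := by
    rw [key 3 1, iteratedDeriv_id_eval, hfar2 3, ea4, hev 3, hc.2.2]
    field_simp
    norm_num
  -- global derivative bound
  have habs1 : ∀ c v : ℝ, |c| ≤ A → |v| ≤ M 1 → |c * ((l^3)⁻¹ * (l^1 * v))| ≤ 1/4 := by
    intro c v hcA hv
    have h0 : |c * ((l^3)⁻¹ * (l^1 * v))| = |c| * ((l^3)⁻¹ * (l * |v|)) := by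
      rw [abs_mul, abs_mul, abs_mul, abs_of_pos (by positivity : (0:ℝ) < (l^3)⁻¹),
        pow_one, abs_of_pos hl0]
    rw [h0]
    have h1 : |c| * ((l^3)⁻¹ * (l * |v|)) ≤ A * ((l^3)⁻¹ * (l * M 1)) := by
      gcongr
    have h2 : A * ((l^3)⁻¹ * (l * M 1)) ≤ 1/4 := by
      rw [show (l^3)⁻¹ * (l * M 1) = M 1 / l^2 by field_simp]
      rw [show A * (M 1 / l^2) = (A * M 1) / l^2 by ring]
      rw [div_le_div_iff₀ (by positivity) (by norm_num : (0:ℝ) < 4)]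
      nlinarith
    linarith
  have hder_bound : ∀ x : ℝ, |deriv θ x - 1| ≤ 1/2 := by
    intro x
    have e := key 1 x
    rw [iteratedDeriv_id_eval, if_neg one_ne_zero, if_pos rfl] at e
    rw [hderiv_eq, e, add_sub_cancel_left]
    refine (abs_add_le _ _).trans ?_
    have b1 := habs1 _ _ ham (hMbd 1 (l*(x+1)))
    have b2 := habs1 _ _ hap (hMbd 1 (l*(x+(-1))))
    linarith
  have hder_lb : ∀ x : ℝ, 1/2 ≤ deriv θ x := by
    intro x
    have := abs_le.mp (hder_bound x)
    linarith [this.1]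
  have hder_ub : ∀ x : ℝ, deriv θ x ≤ 3/2 := by
    intro x
    have := abs_le.mp (hder_bound x)
    linarith [this.2]
  have hmono : StrictMono θ := strictMono_of_deriv_pos (fun x => by linarith [hder_lb x])
  have hbij : Set.BijOn θ (Icc (-1:ℝ) 1) (Icc (-1:ℝ) 1) := by
    refine ⟨fun x hx => ?_, hmono.injective.injOn, ?_⟩
    · constructor
      · rw [← hval_m]; exact hmono.monotone hx.1
      · rw [← hval_p]; exact hmono.monotone hx.2
    · have h := intermediate_value_Icc (by norm_num : (-1:ℝ) ≤ 1)
        (hθsm.continuous.continuousOn)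
      rw [hval_m, hval_p] at h
      exact h
  refine ⟨θ, hθsm, hbij, fun x _ => ⟨hder_lb x, hder_ub x⟩, hval_m, hval_p, hder_m, hder_p,
    h2_m, h2_p, h3_m, h3_p, ?_⟩
  -- general bound
  intro k x hx
  show |iteratedDeriv k θ x| ≤ 1 + 2*A*l^k*(M k)
  rw [key k x]
  have hid_bd : |iteratedDeriv k (fun y : ℝ => y) x| ≤ 1 := by
    rw [iteratedDeriv_id_eval]
    split_ifs with h1 h2
    · exact abs_le.mpr ⟨by linarith [hx.1], by linarith [hx.2]⟩
    · norm_num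
    · norm_num
  have hinv1 : (l^3)⁻¹ ≤ 1 := by
    rw [inv_le_one_iff₀]
    right; nlinarith
  have hT : ∀ c v : ℝ, |c| ≤ A → |v| ≤ M k → |c * ((l^3)⁻¹ * (l^k * v))| ≤ A * l^k * M k := by
    intro c v hcA hv
    have h0 : |c * ((l^3)⁻¹ * (l^k * v))| = |c| * ((l^3)⁻¹ * (l^k * |v|)) := by
      rw [abs_mul, abs_mul, abs_mul, abs_of_pos (by positivity : (0:ℝ) < (l^3)⁻¹),
        abs_of_pos (by positivity : (0:ℝ) < l^k)]
    rw [h0]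
    calc |c| * ((l^3)⁻¹ * (l^k * |v|)) ≤ A * (1 * (l^k * M k)) := by
          gcongr
      _ = A * l^k * M k := by ring
  calc |iteratedDeriv k (fun y : ℝ => y) x
        + (am * ((l^3)⁻¹ * (l^k * iteratedDeriv k hfun (l*(x+1))))
          + ap * ((l^3)⁻¹ * (l^k * iteratedDeriv k hfun (l*(x+(-1))))))|
      ≤ |iteratedDeriv k (fun y : ℝ => y) x|
        + (|am * ((l^3)⁻¹ * (l^k * iteratedDeriv k hfun (l*(x+1))))|
          + |ap * ((l^3)⁻¹ * (l^k * iteratedDeriv k hfun (l*(x+(-1)))))|) := by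
        refine (abs_add_le _ _).trans ?_
        gcongr
        exact abs_add_le _ _
    _ ≤ 1 + (A * l^k * M k + A * l^k * M k) :=
        add_le_add hid_bd (add_le_add (hT _ _ ham (hMbd k _)) (hT _ _ hap (hMbd k _)))
    _ = 1 + 2*A*l^k*(M k) := by ring


end
end

section
/- Let γ ∈ C³([-1,1], ℝⁿ) be an immersion (∂_xγ ≠ 0 everywhere) and let A > 0 satisfy | −⟨∂_x³γ(x), ∂_xγ(x)⟩/|∂_xγ(x)|² + 3⟨∂_x²γ(x), ∂_xγ(x)⟩²/|∂_xγ(x)|⁴ | ≤ A for x ∈ {−1,1}. Then there exists a smooth diffeomorphism θ: [-1,1] → [-1,1] with θ(±1) = ±1, θ'(±1) = 1, θ''(±1) = 0, 1/2 ≤ θ' ≤ 3/2, and sup|θ^{(k)}| ≤ C(k,A) for all k ≥ 2 (with C(k,A) depending only on k and A), such that the reparametrization γ̃ = γ∘θ satisfies, at both endpoints x = ±1, ⟨ ∂_x³γ̃/|∂_xγ̃|³ − 3(⟨∂_x²γ̃, ∂_xγ̃⟩/|∂_xγ̃|⁵)∂_x²γ̃ , ∂_xγ̃ ⟩ = 0;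 i.e. the vector ∂_x³γ̃(±1)/|∂_xγ̃(±1)|³ − 3(⟨∂_x²γ̃(±1), ∂_xγ̃(±1)⟩/|∂_xγ̃(±1)|⁵)∂_x²γ̃(±1) is orthogonal to ∂_xγ̃(±1). -/
open Set MeasureTheory Filter
open scoped RealInnerProductSpace

noncomputable section

variable {n : ℕ}

namespace S8

open Topology
open scoped ContDiff

/-! ### Auxiliary smooth bump construction -/

noncomputable def phi : ℝ → ℝ := fun t => (t-1)^3/6 * Real.smoothTransition (t+1)

lemma contDiff_phi : ContDiff ℝ (⊤:ℕ∞) phi := by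
  unfold phi
  exact (((contDiff_id.sub contDiff_const).pow 3).div_const 6).mul
    (Real.smoothTransition.contDiff.comp (contDiff_id.add contDiff_const))

lemma phi_zero {t : ℝ} (ht : t ≤ -1) : phi t = 0 := by
  unfold phi
  rw [Real.smoothTransition.zero_of_nonpos (by linarith), mul_zero]

lemma phi_cubic {t : ℝ} (ht : 0 ≤ t) : phi t = (t-1)^3/6 := by
  unfold phi
  rw [Real.smoothTransition.one_of_one_le (by linarith), mul_one]

lemma iterDeriv_const_mul (c : ℝ) (f : ℝ → ℝ) (hf : ContDiff ℝ (⊤:ℕ∞) f) (k : ℕ) (x : ℝ) :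
    iteratedDeriv k (fun y => c * f y) x = c * iteratedDeriv k f x := by
  rw [← iteratedDerivWithin_univ, ← iteratedDerivWithin_univ]
  exact iteratedDerivWithin_const_mul (Set.mem_univ x) uniqueDiffOn_univ c
    (hf.contDiffWithinAt.of_le (by exact_mod_cast (le_top : (k:ℕ∞) ≤ ⊤)))

lemma iterDeriv_add (f g : ℝ → ℝ) (hf : ContDiff ℝ (⊤:ℕ∞) f) (hg : ContDiff ℝ (⊤:ℕ∞) g)
    (k : ℕ) (x : ℝ) :
    iteratedDeriv k (fun y => f y + g y) x = iteratedDeriv k f x + iteratedDeriv k g x := by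
  rw [← iteratedDerivWithin_univ, ← iteratedDerivWithin_univ, ← iteratedDerivWithin_univ]
  exact iteratedDerivWithin_add (Set.mem_univ x) uniqueDiffOn_univ
    (hf.contDiffWithinAt.of_le (by exact_mod_cast (le_top : (k:ℕ∞) ≤ ⊤)))
    (hg.contDiffWithinAt.of_le (by exact_mod_cast (le_top : (k:ℕ∞) ≤ ⊤)))

lemma iterDeriv_zero_fun (k : ℕ) : iteratedDeriv k (fun _ : ℝ => (0:ℝ)) = fun _ => 0 := by
  induction k with
  | zero => simp [iteratedDeriv_zero]
  | succ k ih => rw [iteratedDeriv_succ, ih]; funext x; simp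

noncomputable def psi (ε : ℝ) : ℝ → ℝ := fun x => ε^3 * phi (ε⁻¹ * x + (1 - ε⁻¹))

lemma contDiff_psi (ε : ℝ) : ContDiff ℝ (⊤:ℕ∞) (psi ε) := by
  unfold psi
  exact contDiff_const.mul
    (contDiff_phi.comp ((contDiff_const.mul contDiff_id).add contDiff_const))

lemma psi_iterDeriv (ε : ℝ) (k : ℕ) (x : ℝ) :
    iteratedDeriv k (psi ε) x = ε^3 * (ε⁻¹^k * iteratedDeriv k phi (ε⁻¹ * x + (1 - ε⁻¹))) := by
  unfold psi
  have h1 : ContDiff ℝ (⊤:ℕ∞) (fun z => phi (z + (1 - ε⁻¹))) :=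
    contDiff_phi.comp (contDiff_id.add contDiff_const)
  have h2 : (fun x : ℝ => phi (ε⁻¹ * x + (1 - ε⁻¹))) =
      fun x => (fun z => phi (z + (1 - ε⁻¹))) (ε⁻¹ * x) := by funext x; simp
  have h3 : ContDiff ℝ (⊤:ℕ∞) (fun x : ℝ => phi (ε⁻¹ * x + (1 - ε⁻¹))) :=
    contDiff_phi.comp ((contDiff_const.mul contDiff_id).add contDiff_const)
  rw [iterDeriv_const_mul _ _ h3 k x]
  congr 1
  have h4 : ContDiff ℝ (k:ℕ) (fun z => phi (z + (1 - ε⁻¹))) :=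
    h1.of_le (by exact_mod_cast le_top)
  rw [h2, iteratedDeriv_comp_const_mul h4 ε⁻¹]
  · simp only [smul_eq_mul]
    rw [iteratedDeriv_comp_add_const]

noncomputable def Mk (k : ℕ) : ℝ := sSup ((fun t => |iteratedDeriv k phi t|) '' Icc (-1) 1)

lemma Mk_bddAbove (k : ℕ) : BddAbove ((fun t => |iteratedDeriv k phi t|) '' Icc (-1) 1) :=
  (isCompact_Icc.image
    ((contDiff_phi.continuous_iteratedDeriv k (by exact_mod_cast le_top)).abs)).bddAbove

lemma Mk_ge {k : ℕ} {t : ℝ} (ht : t ∈ Icc (-1:ℝ) 1) : |iteratedDeriv k phi t| ≤ Mk k :=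
  le_csSup (Mk_bddAbove k) (mem_image_of_mem _ ht)

lemma Mk_nonneg (k : ℕ) : 0 ≤ Mk k :=
  le_trans (abs_nonneg _) (Mk_ge (t := 0) ⟨by norm_num, by norm_num⟩)

lemma phi_iterDeriv_zero {k : ℕ} {t : ℝ} (ht : t < -1) : iteratedDeriv k phi t = 0 := by
  have h : phi =ᶠ[𝓝 t] (fun _ => 0) := by
    filter_upwards [Iio_mem_nhds ht] with y hy
    exact phi_zero (le_of_lt hy)
  rw [h.iteratedDeriv_eq k, iterDeriv_zero_fun]

lemma psi_bound {ε : ℝ} (hε : 0 < ε) (k : ℕ) {x : ℝ} (hx : x ≤ 1) :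
    |iteratedDeriv k (psi ε) x| ≤ ε^3 * ε⁻¹^k * Mk k := by
  rw [psi_iterDeriv]
  set t := ε⁻¹ * x + (1 - ε⁻¹) with htdef
  have hε1 : (0:ℝ) < ε⁻¹ := inv_pos.mpr hε
  have ht1 : t ≤ 1 := by
    have : ε⁻¹ * x ≤ ε⁻¹ * 1 := by nlinarith
    simp only [htdef]; linarith
  have habs : |ε^3 * (ε⁻¹^k * iteratedDeriv k phi t)|
      = ε^3 * ε⁻¹^k * |iteratedDeriv k phi t| := by
    rw [abs_mul, abs_mul, abs_of_nonneg (by positivity : (0:ℝ) ≤ ε^3),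
      abs_of_nonneg (by positivity : (0:ℝ) ≤ ε⁻¹^k), mul_assoc]
  rw [habs]
  rcases lt_or_ge t (-1) with h | h
  · rw [phi_iterDeriv_zero h]
    simpa using mul_nonneg (by positivity) (Mk_nonneg k)
  · exact mul_le_mul_of_nonneg_left (Mk_ge ⟨h, ht1⟩) (by positivity)

lemma psi_ev_cubic {ε : ℝ} (hε : 0 < ε) : psi ε =ᶠ[𝓝 1] (fun x => (x-1)^3/6) := by
  filter_upwards [Ioi_mem_nhds (by linarith : (1:ℝ) - ε < 1)] with x hx
  have ht : 0 ≤ ε⁻¹ * x + (1 - ε⁻¹) := by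
    rw [mem_Ioi] at hx
    have h1 : ε⁻¹ * (1 - ε) ≤ ε⁻¹ * x := by nlinarith [inv_pos.mpr hε]
    have h2 : ε⁻¹ * (1 - ε) = ε⁻¹ - 1 := by field_simp
    linarith
  unfold psi
  rw [phi_cubic ht]
  have hne : ε ≠ 0 := ne_of_gt hε
  field_simp
  ring

lemma psi_ev_zero {ε : ℝ} (hε : 0 < ε) (hε' : ε ≤ 1/2) : psi ε =ᶠ[𝓝 (-1)] (fun _ => 0) := by
  filter_upwards [Iio_mem_nhds (by linarith : (-1:ℝ) < 1 - 2*ε)] with x hx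
  have ht : ε⁻¹ * x + (1 - ε⁻¹) ≤ -1 := by
    rw [mem_Iio] at hx
    have h1 : ε⁻¹ * x ≤ ε⁻¹ * (1 - 2*ε) := by nlinarith [inv_pos.mpr hε]
    have h2 : ε⁻¹ * (1 - 2*ε) = ε⁻¹ - 2 := by field_simp
    linarith
  unfold psi
  rw [phi_zero ht, mul_zero]

noncomputable def psim (ε : ℝ) : ℝ → ℝ := fun x => -psi ε (-x)

lemma contDiff_psim (ε : ℝ) : ContDiff ℝ (⊤:ℕ∞) (psim ε) :=
  ((contDiff_psi ε).comp contDiff_neg).neg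

noncomputable def theta (ε b c : ℝ) : ℝ → ℝ := fun x => x + (b * psi ε x + c * psim ε x)

lemma contDiff_theta (ε b c : ℝ) : ContDiff ℝ (⊤:ℕ∞) (theta ε b c) :=
  contDiff_id.add ((contDiff_const.mul (contDiff_psi ε)).add
    (contDiff_const.mul (contDiff_psim ε)))

lemma psim_iterDeriv (ε : ℝ) (k : ℕ) (x : ℝ) :
    iteratedDeriv k (psim ε) x = -((-1:ℝ)^k • iteratedDeriv k (psi ε) (-x)) := by
  unfold psim
  rw [iteratedDeriv_fun_neg, iteratedDeriv_comp_neg]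

lemma psim_bound {ε : ℝ} (hε : 0 < ε) (k : ℕ) {x : ℝ} (hx : -1 ≤ x) :
    |iteratedDeriv k (psim ε) x| ≤ ε^3 * ε⁻¹^k * Mk k := by
  rw [psim_iterDeriv, abs_neg, smul_eq_mul, abs_mul, abs_pow, abs_neg, abs_one, one_pow, one_mul]
  exact psi_bound hε k (by linarith : -x ≤ 1)

lemma psim_ev_one {ε : ℝ} (hε : 0 < ε) (hε' : ε ≤ 1/2) : psim ε =ᶠ[𝓝 1] (fun _ => 0) := by
  have hneg : Tendsto (fun x : ℝ => -x) (𝓝 1) (𝓝 (-1)) := by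
    simpa using (continuous_neg.tendsto (1:ℝ))
  have := (psi_ev_zero hε hε').comp_tendsto hneg
  filter_upwards [this] with x hx
  simp only [psim, Function.comp] at hx ⊢
  rw [hx]; simp

lemma psim_ev_negone {ε : ℝ} (hε : 0 < ε) : psim ε =ᶠ[𝓝 (-1)] (fun x => (x+1)^3/6) := by
  have hneg : Tendsto (fun x : ℝ => -x) (𝓝 (-1)) (𝓝 1) := by
    simpa using (continuous_neg.tendsto (-1:ℝ))
  have := (psi_ev_cubic hε).comp_tendsto hneg
  filter_upwards [this] with x hx
  simp only [psim, Function.comp] at hx ⊢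
  rw [hx]; ring

lemma theta_ev_one {ε b c : ℝ} (hε : 0 < ε) (hε' : ε ≤ 1/2) :
    theta ε b c =ᶠ[𝓝 1] (fun x => x + b*(x-1)^3/6) := by
  filter_upwards [psi_ev_cubic hε, psim_ev_one hε hε'] with x h1 h2
  simp only [theta, h1, h2]; ring

lemma theta_ev_negone {ε b c : ℝ} (hε : 0 < ε) (hε' : ε ≤ 1/2) :
    theta ε b c =ᶠ[𝓝 (-1)] (fun x => x + c*(x-(-1))^3/6) := by
  filter_upwards [psi_ev_zero hε hε', psim_ev_negone hε] with x h1 h2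
  simp only [theta, h1, h2]; ring

lemma cubic_hasDeriv (c r x : ℝ) :
    HasDerivAt (fun x => x + c*(x-r)^3/6) (1 + c*(x-r)^2/2) x := by
  have h : HasDerivAt (fun x : ℝ => x + c*(x-r)^3/6)
      (1 + c * (↑3 * (x - r)^(3-1) * 1) / 6) x :=
    (hasDerivAt_id x).add ((((hasDerivAt_id x).sub_const r).pow 3).const_mul c |>.div_const 6)
  convert h using 1; norm_num; ring

lemma cubic_deriv (c r : ℝ) :
    deriv (fun x => x + c*(x-r)^3/6) = fun x => 1 + c*(x-r)^2/2 :=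
  funext fun x => (cubic_hasDeriv c r x).deriv

lemma cubic_deriv2 (c r : ℝ) :
    deriv (deriv (fun x => x + c*(x-r)^3/6)) = fun x => c*(x-r) := by
  rw [cubic_deriv]
  funext x
  have h : HasDerivAt (fun x : ℝ => 1 + c*(x-r)^2/2) (0 + c * (↑2 * (x - r)^(2-1) * 1) / 2) x :=
    (hasDerivAt_const x 1).add ((((hasDerivAt_id x).sub_const r).pow 2).const_mul c |>.div_const 2)
  rw [h.deriv]; norm_num; ring

lemma cubic_deriv3 (c r : ℝ) :
    deriv (deriv (deriv (fun x => x + c*(x-r)^3/6))) = fun _ => c := by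
  rw [cubic_deriv2]
  funext x
  have h : HasDerivAt (fun x : ℝ => c*(x-r)) (c * 1) x :=
    ((hasDerivAt_id x).sub_const r).const_mul c
  rw [h.deriv, mul_one]

lemma iterDeriv2_eq {F : Type*} [NormedAddCommGroup F] [NormedSpace ℝ F] (f : ℝ → F) :
    iteratedDeriv 2 f = deriv (deriv f) := by
  rw [iteratedDeriv_succ, iteratedDeriv_one]

lemma iterDeriv3_eq {F : Type*} [NormedAddCommGroup F] [NormedSpace ℝ F] (f : ℝ → F) :
    iteratedDeriv 3 f = deriv (deriv (deriv f)) := by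
  rw [iteratedDeriv_succ, iterDeriv2_eq]

lemma theta_vals {ε b c : ℝ} (r C : ℝ)
    (hev : theta ε b c =ᶠ[𝓝 r] (fun x => x + C*(x-r)^3/6)) :
    theta ε b c r = r ∧ deriv (theta ε b c) r = 1 ∧
    iteratedDeriv 2 (theta ε b c) r = 0 ∧ iteratedDeriv 3 (theta ε b c) r = C := by
  refine ⟨?_, ?_, ?_, ?_⟩
  · have := hev.eq_of_nhds; simpa using this
  · rw [hev.deriv_eq, cubic_deriv]; simp
  · rw [(hev.iteratedDeriv_eq 2), iterDeriv2_eq, cubic_deriv2]; simp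
  · rw [(hev.iteratedDeriv_eq 3), iterDeriv3_eq, cubic_deriv3]

lemma theta_iterDeriv (ε b c : ℝ) (k : ℕ) (x : ℝ) :
    iteratedDeriv k (theta ε b c) x = iteratedDeriv k (fun y : ℝ => y) x
      + (b * iteratedDeriv k (psi ε) x + c * iteratedDeriv k (psim ε) x) := by
  unfold theta
  rw [iterDeriv_add (fun y : ℝ => y) _ (by exact contDiff_id)
    ((contDiff_const.mul (contDiff_psi ε)).add (contDiff_const.mul (contDiff_psim ε))) k x,
    iterDeriv_add _ _ (contDiff_const.mul (contDiff_psi ε))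
      (contDiff_const.mul (contDiff_psim ε)) k x,
    iterDeriv_const_mul b _ (contDiff_psi ε) k x, iterDeriv_const_mul c _ (contDiff_psim ε) k x]

lemma iterDeriv_id_ge2 {k : ℕ} (hk : 2 ≤ k) (x : ℝ) :
    iteratedDeriv k (fun y : ℝ => y) x = 0 := by
  obtain ⟨j, rfl⟩ : ∃ j, k = j + 2 := ⟨k - 2, by omega⟩
  rw [show j + 2 = (j + 1) + 1 from rfl, iteratedDeriv_succ']
  have h1 : deriv (fun y : ℝ => y) = fun _ => (1:ℝ) := funext fun x => deriv_id x
  rw [h1, iteratedDeriv_succ']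
  have h2 : deriv (fun _ : ℝ => (1:ℝ)) = fun _ => (0:ℝ) := funext fun x => deriv_const x 1
  rw [h2, iterDeriv_zero_fun]

lemma theta_deriv (ε b c : ℝ) (x : ℝ) :
    deriv (theta ε b c) x = 1 + (b * deriv (psi ε) x + c * deriv (psim ε) x) := by
  have := theta_iterDeriv ε b c 1 x
  simpa [iteratedDeriv_one, deriv_id] using this

lemma chain3 {F : Type*} [NormedAddCommGroup F] [NormedSpace ℝ F]
    {γ : ℝ → F} {θ : ℝ → ℝ} (hγ : ContDiff ℝ 3 γ) (hθ : ContDiff ℝ (⊤:ℕ∞) θ)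
    {x₀ : ℝ} (h0 : θ x₀ = x₀) (h1 : deriv θ x₀ = 1) (h2 : iteratedDeriv 2 θ x₀ = 0) :
    deriv (γ ∘ θ) x₀ = deriv γ x₀ ∧
    iteratedDeriv 2 (γ ∘ θ) x₀ = iteratedDeriv 2 γ x₀ ∧
    iteratedDeriv 3 (γ ∘ θ) x₀ = iteratedDeriv 3 γ x₀ + iteratedDeriv 3 θ x₀ • deriv γ x₀ := by
  have hγ1 : Differentiable ℝ γ := hγ.differentiable (by norm_num)
  have hγd : ContDiff ℝ 2 (deriv γ) := by
    have : ContDiff ℝ (2+1 : WithTop ℕ∞) γ := by exact_mod_cast hγ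
    exact (contDiff_succ_iff_deriv.mp this).2.2
  have hγ2 : Differentiable ℝ (deriv γ) := hγd.differentiable (by norm_num)
  have hγdd : ContDiff ℝ 1 (deriv (deriv γ)) := by
    have : ContDiff ℝ (1+1 : WithTop ℕ∞) (deriv γ) := by exact_mod_cast hγd
    exact (contDiff_succ_iff_deriv.mp this).2.2
  have hγ3 : Differentiable ℝ (deriv (deriv γ)) := hγdd.differentiable one_ne_zero
  have hθ' : ContDiff ℝ (∞ : WithTop ℕ∞) θ := by exact_mod_cast hθ
  have hθ1 : Differentiable ℝ θ := hθ'.differentiable (by norm_num)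
  have hθd' : ContDiff ℝ (∞ : WithTop ℕ∞) (deriv θ) := (contDiff_infty_iff_deriv.mp hθ').2
  have hθ2 : Differentiable ℝ (deriv θ) := hθd'.differentiable (by norm_num)
  have hθdd' : ContDiff ℝ (∞ : WithTop ℕ∞) (deriv (deriv θ)) :=
    (contDiff_infty_iff_deriv.mp hθd').2
  have hθ3 : Differentiable ℝ (deriv (deriv θ)) := hθdd'.differentiable (by norm_num)
  have e1 : deriv (γ ∘ θ) = fun x => deriv θ x • deriv γ (θ x) :=
    funext fun x => deriv.scomp x (hγ1 _) (hθ1 _)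
  have hcomp1 : ∀ x, DifferentiableAt ℝ (fun y => deriv γ (θ y)) x := fun x =>
    (hγ2 _).comp x (hθ1 x)
  have hcomp2 : ∀ x, DifferentiableAt ℝ (fun y => deriv (deriv γ) (θ y)) x := fun x =>
    (hγ3 _).comp x (hθ1 x)
  have e1c : ∀ x, deriv (fun y => deriv γ (θ y)) x = deriv θ x • deriv (deriv γ) (θ x) := by
    intro x
    have := deriv.scomp (h := θ) (g₁ := deriv γ) x (hγ2 _) (hθ1 x)
    simpa [Function.comp_def] using this
  have e2 : deriv (deriv (γ ∘ θ)) = fun x =>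
      deriv (deriv θ) x • deriv γ (θ x) + deriv θ x • (deriv θ x • deriv (deriv γ) (θ x)) := by
    rw [e1]
    funext x
    rw [deriv_fun_smul (hθ2 x) (hcomp1 x), e1c x]
    abel
  have h2' : deriv (deriv θ) x₀ = 0 := by rw [iterDeriv2_eq θ] at h2; exact h2
  have v2 : iteratedDeriv 2 (γ ∘ θ) x₀ = iteratedDeriv 2 γ x₀ := by
    rw [iterDeriv2_eq, iterDeriv2_eq, e2]
    simp [h0, h1, h2']
  refine ⟨by rw [e1]; simp [h0, h1], v2, ?_⟩
  have e1c' : ∀ x, deriv (fun y => deriv (deriv γ) (θ y)) x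
      = deriv θ x • deriv (deriv (deriv γ)) (θ x) := by
    intro x
    have := deriv.scomp (h := θ) (g₁ := deriv (deriv γ)) x (hγ3 _) (hθ1 x)
    simpa [Function.comp_def] using this
  have dA : DifferentiableAt ℝ (fun x => deriv (deriv θ) x • deriv γ (θ x)) x₀ :=
    (hθ3 x₀).smul (hcomp1 x₀)
  have dInner : DifferentiableAt ℝ (fun x => deriv θ x • deriv (deriv γ) (θ x)) x₀ :=
    (hθ2 x₀).smul (hcomp2 x₀)
  have dB : DifferentiableAt ℝ (fun x => deriv θ x • (deriv θ x • deriv (deriv γ) (θ x))) x₀ :=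
    (hθ2 x₀).smul dInner
  rw [iterDeriv3_eq, iterDeriv3_eq, e2]
  rw [deriv_fun_add dA dB]
  have tA : deriv (fun x => deriv (deriv θ) x • deriv γ (θ x)) x₀
      = deriv (deriv (deriv θ)) x₀ • deriv γ x₀ := by
    rw [deriv_fun_smul (hθ3 x₀) (hcomp1 x₀), e1c x₀]
    simp [h0, h1, h2']
  have tB : deriv (fun x => deriv θ x • (deriv θ x • deriv (deriv γ) (θ x))) x₀
      = deriv (deriv (deriv γ)) x₀ := by
    rw [deriv_fun_smul (hθ2 x₀) dInner, deriv_fun_smul (hθ2 x₀) (hcomp2 x₀), e1c' x₀]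
    simp [h0, h1, h2']
  rw [tA, tB, ← iterDeriv3_eq θ]
  abel

lemma final_inner {F : Type*} [NormedAddCommGroup F] [InnerProductSpace ℝ F]
    {u v w : F} (hv : v ≠ 0) :
    ⟪(‖v‖^3)⁻¹ • (u + (-(⟪u, v⟫ / ‖v‖^2) + 3 * ⟪w, v⟫^2 / ‖v‖^4) • v)
      - (3 * ⟪w, v⟫ / ‖v‖^5) • w, v⟫ = 0 := by
  have hn : ‖v‖ ≠ 0 := norm_ne_zero_iff.mpr hv
  rw [inner_sub_left, real_inner_smul_left, real_inner_smul_left, inner_add_left,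
    real_inner_smul_left, real_inner_self_eq_norm_sq]
  field_simp
  ring

end S8

/-- reparametrization to the analytic third-order boundary condition
(Proposition 3.3(b)). -/
theorem statement8
    (n : ℕ) (hn : 2 ≤ n) (A : ℝ) (hA : 0 < A) :
    ∃ C : ℕ → ℝ,
      ∀ γ : ℝ → EuclideanSpace ℝ (Fin n),
        ContDiff ℝ 3 γ →
        (∀ x ∈ Icc (-1:ℝ) 1, deriv γ x ≠ 0) →
        (∀ x ∈ ({-1, 1} : Set ℝ),
          |(-(⟪iteratedDeriv 3 γ x, deriv γ x⟫ / ‖deriv γ x‖ ^ 2))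
            + 3 * ⟪iteratedDeriv 2 γ x, deriv γ x⟫ ^ 2 / ‖deriv γ x‖ ^ 4| ≤ A) →
        ∃ θ : ℝ → ℝ,
          ContDiff ℝ (⊤ : ℕ∞) θ ∧
          Set.BijOn θ (Icc (-1:ℝ) 1) (Icc (-1:ℝ) 1) ∧
          θ (-1) = -1 ∧ θ 1 = 1 ∧
          deriv θ (-1) = 1 ∧ deriv θ 1 = 1 ∧
          iteratedDeriv 2 θ (-1) = 0 ∧ iteratedDeriv 2 θ 1 = 0 ∧
          (∀ x ∈ Icc (-1:ℝ) 1, 1/2 ≤ deriv θ x ∧ deriv θ x ≤ 3/2) ∧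
          (∀ k : ℕ, 2 ≤ k → ∀ x ∈ Icc (-1:ℝ) 1, |iteratedDeriv k θ x| ≤ C k) ∧
          (∀ x ∈ ({-1, 1} : Set ℝ),
            ⟪(‖deriv (γ ∘ θ) x‖ ^ 3)⁻¹ • iteratedDeriv 3 (γ ∘ θ) x
                - (3 * ⟪iteratedDeriv 2 (γ ∘ θ) x, deriv (γ ∘ θ) x⟫
                    / ‖deriv (γ ∘ θ) x‖ ^ 5) • iteratedDeriv 2 (γ ∘ θ) x,
              deriv (γ ∘ θ) x⟫ = 0) := by
  classical
  have hM1 : 0 ≤ S8.Mk 1 := S8.Mk_nonneg 1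
  have hpos : 0 < 4*A*(S8.Mk 1 + 1) := by nlinarith
  set ε : ℝ := min (1/2) ((Real.sqrt (4*A*(S8.Mk 1 + 1)))⁻¹) with hεdef
  have hsq : 0 < Real.sqrt (4*A*(S8.Mk 1 + 1)) := Real.sqrt_pos.mpr hpos
  have hε : 0 < ε := lt_min (by norm_num) (inv_pos.mpr hsq)
  have hεhalf : ε ≤ 1/2 := min_le_left _ _
  have hε2 : ε^2 ≤ (4*A*(S8.Mk 1 + 1))⁻¹ := by
    have h1 : ε ≤ (Real.sqrt (4*A*(S8.Mk 1 + 1)))⁻¹ := min_le_right _ _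
    have h2 : ε^2 ≤ ((Real.sqrt (4*A*(S8.Mk 1 + 1)))⁻¹)^2 := by
      rw [sq, sq]; exact mul_le_mul h1 h1 (le_of_lt hε) (by positivity)
    calc ε^2 ≤ ((Real.sqrt (4*A*(S8.Mk 1 + 1)))⁻¹)^2 := h2
      _ = (4*A*(S8.Mk 1 + 1))⁻¹ := by
          rw [inv_pow, Real.sq_sqrt (le_of_lt hpos)]
  have hkey : 2*A*(ε^3*ε⁻¹^1*S8.Mk 1) ≤ 1/2 := by
    have he : ε^3*ε⁻¹^1 = ε^2 := by
      field_simp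
    rw [he]
    have h3 : 2*A*S8.Mk 1*ε^2 ≤ 2*A*S8.Mk 1*(4*A*(S8.Mk 1 + 1))⁻¹ :=
      mul_le_mul_of_nonneg_left hε2 (by positivity)
    have h4 : 2*A*S8.Mk 1*(4*A*(S8.Mk 1 + 1))⁻¹ ≤ 1/2 := by
      rw [inv_eq_one_div, ← mul_div_assoc, mul_one, div_le_iff₀ hpos]
      nlinarith
    calc 2*A*(ε^2*S8.Mk 1) = 2*A*S8.Mk 1*ε^2 := by ring
      _ ≤ 1/2 := le_trans h3 h4
  refine ⟨fun k => 2*A*(ε^3*ε⁻¹^k*S8.Mk k), ?_⟩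
  intro γ hγ himm hbound
  set b : ℝ := -(⟪iteratedDeriv 3 γ 1, deriv γ 1⟫ / ‖deriv γ 1‖ ^ 2)
      + 3 * ⟪iteratedDeriv 2 γ 1, deriv γ 1⟫ ^ 2 / ‖deriv γ 1‖ ^ 4 with hbdef
  set c : ℝ := -(⟪iteratedDeriv 3 γ (-1), deriv γ (-1)⟫ / ‖deriv γ (-1)‖ ^ 2)
      + 3 * ⟪iteratedDeriv 2 γ (-1), deriv γ (-1)⟫ ^ 2 / ‖deriv γ (-1)‖ ^ 4 with hcdef
  have hb : |b| ≤ A := hbound 1 (by norm_num)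
  have hc : |c| ≤ A := hbound (-1) (by norm_num)
  set θ : ℝ → ℝ := S8.theta ε b c with hθdef
  have hθsmooth : ContDiff ℝ (⊤:ℕ∞) θ := S8.contDiff_theta ε b c
  have hv1 := S8.theta_vals (ε := ε) (b := b) (c := c) 1 b (S8.theta_ev_one hε hεhalf)
  have hv2 := S8.theta_vals (ε := ε) (b := b) (c := c) (-1) c (S8.theta_ev_negone hε hεhalf)
  rw [← hθdef] at hv1 hv2
  -- derivative bounds on Icc
  have hθd : ∀ x ∈ Icc (-1:ℝ) 1, |deriv θ x - 1| ≤ 1/2 := by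
    intro x hx
    have h1 : |deriv (S8.psi ε) x| ≤ ε^3*ε⁻¹^1*S8.Mk 1 := by
      have := S8.psi_bound hε 1 (hx.2)
      rwa [iteratedDeriv_one] at this
    have h2 : |deriv (S8.psim ε) x| ≤ ε^3*ε⁻¹^1*S8.Mk 1 := by
      have := S8.psim_bound hε 1 (hx.1)
      rwa [iteratedDeriv_one] at this
    rw [hθdef, S8.theta_deriv]
    have hB : (0:ℝ) ≤ ε^3*ε⁻¹^1*S8.Mk 1 := by positivity
    calc |1 + (b * deriv (S8.psi ε) x + c * deriv (S8.psim ε) x) - 1|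
        = |b * deriv (S8.psi ε) x + c * deriv (S8.psim ε) x| := by
          rw [add_sub_cancel_left]
      _ ≤ |b * deriv (S8.psi ε) x| + |c * deriv (S8.psim ε) x| := abs_add_le _ _
      _ = |b| * |deriv (S8.psi ε) x| + |c| * |deriv (S8.psim ε) x| := by
          rw [abs_mul, abs_mul]
      _ ≤ A * (ε^3*ε⁻¹^1*S8.Mk 1) + A * (ε^3*ε⁻¹^1*S8.Mk 1) :=
          add_le_add (mul_le_mul hb h1 (abs_nonneg _) hA.le)
            (mul_le_mul hc h2 (abs_nonneg _) hA.le)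
      _ = 2*A*(ε^3*ε⁻¹^1*S8.Mk 1) := by ring
      _ ≤ 1/2 := hkey
  have hθd' : ∀ x ∈ Icc (-1:ℝ) 1, 1/2 ≤ deriv θ x ∧ deriv θ x ≤ 3/2 := by
    intro x hx
    have := abs_le.mp (hθd x hx)
    constructor <;> linarith [this.1, this.2]
  -- monotonicity / bijectivity
  have hθcont : Continuous θ := hθsmooth.continuous
  have hmono : StrictMonoOn θ (Icc (-1:ℝ) 1) := by
    apply strictMonoOn_of_deriv_pos (convex_Icc _ _) hθcont.continuousOn
    intro x hx
    rw [interior_Icc] at hx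
    have := (hθd' x (Ioo_subset_Icc_self hx)).1
    linarith
  have hmapsTo : MapsTo θ (Icc (-1:ℝ) 1) (Icc (-1:ℝ) 1) := by
    intro x hx
    have hlo : θ (-1) ≤ θ x := hmono.monotoneOn (by norm_num) hx hx.1
    have hhi : θ x ≤ θ 1 := hmono.monotoneOn hx (by norm_num) hx.2
    rw [hv2.1] at hlo; rw [hv1.1] at hhi
    exact ⟨hlo, hhi⟩
  have hsurj : SurjOn θ (Icc (-1:ℝ) 1) (Icc (-1:ℝ) 1) := by
    have := intermediate_value_Icc (by norm_num : (-1:ℝ) ≤ 1) hθcont.continuousOn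
    rw [hv2.1, hv1.1] at this
    exact this
  refine ⟨θ, hθsmooth, ⟨hmapsTo, hmono.injOn, hsurj⟩, hv2.1, hv1.1, hv2.2.1, hv1.2.1,
    hv2.2.2.1, hv1.2.2.1, hθd', ?_, ?_⟩
  · -- higher derivative bounds
    intro k hk x hx
    rw [hθdef, S8.theta_iterDeriv, S8.iterDeriv_id_ge2 hk, zero_add]
    have h1 := S8.psi_bound hε k hx.2
    have h2 := S8.psim_bound hε k hx.1
    calc |b * iteratedDeriv k (S8.psi ε) x + c * iteratedDeriv k (S8.psim ε) x|
        ≤ |b| * |iteratedDeriv k (S8.psi ε) x| + |c| * |iteratedDeriv k (S8.psim ε) x| := by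
          refine (abs_add_le _ _).trans ?_; rw [abs_mul, abs_mul]
      _ ≤ A * (ε^3*ε⁻¹^k*S8.Mk k) + A * (ε^3*ε⁻¹^k*S8.Mk k) :=
          add_le_add (mul_le_mul hb h1 (abs_nonneg _) hA.le)
            (mul_le_mul hc h2 (abs_nonneg _) hA.le)
      _ = 2*A*(ε^3*ε⁻¹^k*S8.Mk k) := by ring
  · -- third-order boundary condition
    intro x hx
    have hx' : x = -1 ∨ x = 1 := by
      rcases hx with h | h
      · exact Or.inl h
      · exact Or.inr h
    rcases hx' with rfl | rfl
    · obtain ⟨d1, d2, d3⟩ := S8.chain3 (θ := θ) hγ hθsmooth hv2.1 hv2.2.1 hv2.2.2.1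
      rw [d1, d2, d3, hv2.2.2.2]
      have hvne : deriv γ (-1) ≠ 0 := himm (-1) (by norm_num)
      rw [hcdef]
      exact S8.final_inner hvne
    · obtain ⟨d1, d2, d3⟩ := S8.chain3 (θ := θ) hγ hθsmooth hv1.1 hv1.2.1 hv1.2.2.1
      rw [d1, d2, d3, hv1.2.2.2]
      have hvne : deriv γ 1 ≠ 0 := himm 1 (by norm_num)
      rw [hbdef]
      exact S8.final_inner hvne


end
end

section
/- Let n ≥ 2, let ν ∈ ℝⁿ with |ν| = 1, c ∈ ℝ, and let H = {x ∈ ℝⁿ : ⟨x, ν⟩ = c} be an affine hyperplane. Let L₀ > 0 and let γ: [-1,1] → ℝⁿ be a twice continuously differentiable immersion with L(γ) = L₀, γ(−1), γ(1) ∈ H, and the unit tangents ∂_sγ(−1), ∂_sγ(1) parallel to ν (orthogonal to H). Then E(γ) ≥ π²/L₀. -/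
open Set MeasureTheory Filter
open scoped RealInnerProductSpace

noncomputable section

variable {n : ℕ}

private lemma cs_aux {f g : ℝ → ℝ} (hf : ContinuousOn f (Icc (-1:ℝ) 1))
    (hg : ContinuousOn g (Icc (-1:ℝ) 1)) :
    (∫ x in (-1:ℝ)..1, f x * g x) ^ 2 ≤
      (∫ x in (-1:ℝ)..1, f x ^ 2) * ∫ x in (-1:ℝ)..1, g x ^ 2 := by
  have huIcc : uIcc (-1:ℝ) 1 = Icc (-1:ℝ) 1 := uIcc_of_le (by norm_num)
  have hf2 : IntervalIntegrable (fun x => f x ^ 2) volume (-1) 1 :=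
    (ContinuousOn.pow (by rwa [huIcc]) 2).intervalIntegrable
  have hg2 : IntervalIntegrable (fun x => g x ^ 2) volume (-1) 1 :=
    (ContinuousOn.pow (by rwa [huIcc]) 2).intervalIntegrable
  have hfg : IntervalIntegrable (fun x => f x * g x) volume (-1) 1 :=
    (ContinuousOn.mul (by rwa [huIcc]) (by rwa [huIcc])).intervalIntegrable
  set A := ∫ x in (-1:ℝ)..1, f x ^ 2
  set B := ∫ x in (-1:ℝ)..1, f x * g x
  set C := ∫ x in (-1:ℝ)..1, g x ^ 2
  have key : ∀ t : ℝ, 0 ≤ A * (t * t) + (2 * B) * t + C := by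
    intro t
    have h0 : 0 ≤ ∫ x in (-1:ℝ)..1, (t * f x + g x) ^ 2 :=
      intervalIntegral.integral_nonneg (by norm_num) (fun x _ => sq_nonneg _)
    have hrw : (fun x => (t * f x + g x) ^ 2)
        = fun x => (t * t) * f x ^ 2 + ((2 * t) * (f x * g x) + g x ^ 2) := by
      funext x; ring
    rw [hrw, intervalIntegral.integral_add (hf2.const_mul _) ((hfg.const_mul _).add hg2),
      intervalIntegral.integral_add (hfg.const_mul _) hg2,
      intervalIntegral.integral_const_mul, intervalIntegral.integral_const_mul] at h0
    linarith
  have hd := discrim_le_zero key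
  rw [discrim] at hd
  nlinarith [hd]


private lemma angle_bound {n : ℕ} {U : Set ℝ} (hU : IsOpen U)
    {T : ℝ → EuclideanSpace ℝ (Fin n)} (hT : ContDiffOn ℝ 1 T U)
    (hTnorm : ∀ x ∈ U, ‖T x‖ = 1)
    {ν : EuclideanSpace ℝ (Fin n)} (hν : ‖ν‖ = 1)
    {a b : ℝ} (hab : a ≤ b) (hsub : Icc a b ⊆ U) :
    |Real.arccos ⟪T b, ν⟫ - Real.arccos ⟪T a, ν⟫| ≤ ∫ x in a..b, ‖deriv T x‖ := by
  have huIcc : uIcc a b = Icc a b := uIcc_of_le hab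
  have hTd : ∀ x ∈ U, HasDerivAt T (deriv T x) x := fun x hx =>
    ((hT.differentiableOn one_ne_zero).differentiableAt (hU.mem_nhds hx)).hasDerivAt
  have hvle : ∀ x ∈ U, |⟪T x, ν⟫| ≤ 1 := by
    intro x hx
    calc |⟪T x, ν⟫| ≤ ‖T x‖ * ‖ν‖ := abs_real_inner_le_norm _ _
      _ = 1 := by rw [hTnorm x hx, hν, one_mul]
  have hperp : ∀ x ∈ U, ⟪deriv T x, T x⟫ = 0 := by
    intro x hx
    have h1 : HasDerivAt (fun y => ⟪T y, T y⟫) (⟪T x, deriv T x⟫ + ⟪deriv T x, T x⟫) x :=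
      (hTd x hx).inner ℝ (hTd x hx)
    have h2 : (fun y => ⟪T y, T y⟫) =ᶠ[nhds x] (fun _ => (1:ℝ)) := by
      filter_upwards [hU.mem_nhds hx] with y hy
      rw [real_inner_self_eq_norm_sq, hTnorm y hy]; norm_num
    have h3 : HasDerivAt (fun _ : ℝ => (1:ℝ)) (⟪T x, deriv T x⟫ + ⟪deriv T x, T x⟫) x :=
      h1.congr_of_eventuallyEq h2.symm
    have h4 := h3.unique (hasDerivAt_const x 1)
    rw [real_inner_comm] at h4
    linarith
  have hbound : ∀ x ∈ U, |⟪deriv T x, ν⟫| ≤ ‖deriv T x‖ * Real.sqrt (1 - ⟪T x, ν⟫ ^ 2) := by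
    intro x hx
    have hw : ⟪deriv T x, ν⟫ = ⟪deriv T x, ν - ⟪T x, ν⟫ • T x⟫ := by
      rw [inner_sub_right, real_inner_smul_right, hperp x hx]; ring
    have hwn : ‖ν - ⟪T x, ν⟫ • T x‖ = Real.sqrt (1 - ⟪T x, ν⟫ ^ 2) := by
      rw [← Real.sqrt_sq (norm_nonneg (ν - ⟪T x, ν⟫ • T x))]
      congr 1
      have h5 : ⟪ν, ⟪T x, ν⟫ • T x⟫ = ⟪T x, ν⟫ * ⟪T x, ν⟫ := by
        rw [real_inner_smul_right, real_inner_comm]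
      rw [norm_sub_sq_real, norm_smul, hTnorm x hx, hν, h5]
      rw [Real.norm_eq_abs]
      rw [mul_one, one_pow, sq_abs]
      ring
    rw [hw, ← hwn]
    exact abs_real_inner_le_norm _ _
  have hTc : ContinuousOn (deriv T) U := hT.continuousOn_deriv_of_isOpen hU le_rfl
  have hvc : ContinuousOn (fun x => ⟪T x, ν⟫) U := hT.continuousOn.inner continuousOn_const
  have hnormint : IntervalIntegrable (fun x => ‖deriv T x‖) volume a b := by
    apply ContinuousOn.intervalIntegrable
    rw [huIcc]; exact (hTc.mono hsub).norm
  have step : ∀ ε ∈ Ioo (0:ℝ) 1,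
      |Real.arccos ((1-ε) * ⟪T b, ν⟫) - Real.arccos ((1-ε) * ⟪T a, ν⟫)|
        ≤ ∫ x in a..b, ‖deriv T x‖ := by
    intro ε hε
    set cc : ℝ := 1 - ε with hcc
    have hcc0 : 0 < cc := by simp only [hcc]; linarith [hε.2]
    have hcc1 : cc < 1 := by simp only [hcc]; linarith [hε.1]
    set D : ℝ → ℝ := fun x =>
      -(1 / Real.sqrt (1 - (cc * ⟪T x, ν⟫) ^ 2)) * (cc * ⟪deriv T x, ν⟫) with hD
    have hne : ∀ x ∈ U, 0 < 1 - (cc * ⟪T x, ν⟫) ^ 2 := by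
      intro x hx
      have h1 := abs_le.mp (hvle x hx)
      have hv2 : ⟪T x, ν⟫ ^ 2 ≤ 1 := by nlinarith [h1.1, h1.2]
      have h2 : cc ^ 2 < 1 := by nlinarith
      have h3 : (cc * ⟪T x, ν⟫) ^ 2 = cc ^ 2 * ⟪T x, ν⟫ ^ 2 := by ring
      nlinarith [sq_nonneg cc]
    have hG : ∀ x ∈ U, HasDerivAt (fun y => Real.arccos (cc * ⟪T y, ν⟫)) (D x) x := by
      intro x hx
      have h1 : HasDerivAt (fun y => cc * ⟪T y, ν⟫) (cc * ⟪deriv T x, ν⟫) x := by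
        have h0 := (hTd x hx).inner ℝ (hasDerivAt_const x ν)
        simpa using h0.const_mul cc
      have h2 : cc * ⟪T x, ν⟫ ≠ -1 := by
        intro h; have := hne x hx; rw [h] at this; norm_num at this
      have h3 : cc * ⟪T x, ν⟫ ≠ 1 := by
        intro h; have := hne x hx; rw [h] at this; norm_num at this
      have h4 := (Real.hasDerivAt_arccos h2 h3).comp x h1
      simpa [hD, Function.comp_def, mul_comm, mul_left_comm, mul_assoc] using h4
    have hDb : ∀ x ∈ U, |D x| ≤ ‖deriv T x‖ := by
      intro x hx
      have h0 := hne x hx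
      have hs0 : 0 < Real.sqrt (1 - (cc * ⟪T x, ν⟫) ^ 2) := Real.sqrt_pos.mpr h0
      have hkey : cc * Real.sqrt (1 - ⟪T x, ν⟫ ^ 2) ≤ Real.sqrt (1 - (cc * ⟪T x, ν⟫) ^ 2) := by
        have he : cc * Real.sqrt (1 - ⟪T x, ν⟫ ^ 2) = Real.sqrt (cc ^ 2 * (1 - ⟪T x, ν⟫ ^ 2)) := by
          rw [Real.sqrt_mul (sq_nonneg cc), Real.sqrt_sq hcc0.le]
        rw [he]
        apply Real.sqrt_le_sqrt
        nlinarith [sq_nonneg (⟪T x, ν⟫), hcc0, hcc1]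
      have h1 := hbound x hx
      have habs : |D x| = cc * |⟪deriv T x, ν⟫| / Real.sqrt (1 - (cc * ⟪T x, ν⟫) ^ 2) := by
        have he : D x = -(cc * ⟪deriv T x, ν⟫ / Real.sqrt (1 - (cc * ⟪T x, ν⟫) ^ 2)) := by
          rw [hD]; ring
        rw [he, abs_neg, abs_div, abs_mul, abs_of_pos hs0, abs_of_pos hcc0]
      rw [habs, div_le_iff₀ hs0]
      calc cc * |⟪deriv T x, ν⟫|
          ≤ cc * (‖deriv T x‖ * Real.sqrt (1 - ⟪T x, ν⟫ ^ 2)) :=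
            mul_le_mul_of_nonneg_left h1 hcc0.le
        _ = ‖deriv T x‖ * (cc * Real.sqrt (1 - ⟪T x, ν⟫ ^ 2)) := by ring
        _ ≤ ‖deriv T x‖ * Real.sqrt (1 - (cc * ⟪T x, ν⟫) ^ 2) :=
            mul_le_mul_of_nonneg_left hkey (norm_nonneg _)
    have hDc : ContinuousOn D U := by
      apply ContinuousOn.mul
      · apply ContinuousOn.neg
        apply ContinuousOn.div continuousOn_const
        · exact Real.continuous_sqrt.comp_continuousOn
            (continuousOn_const.sub ((continuousOn_const.mul hvc).pow 2))
        · intro x hx; exact (Real.sqrt_pos.mpr (hne x hx)).ne'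
      · exact continuousOn_const.mul (hTc.inner continuousOn_const)
    have hDint : IntervalIntegrable D volume a b := by
      apply ContinuousOn.intervalIntegrable
      rw [huIcc]; exact hDc.mono hsub
    have hftc : (∫ x in a..b, D x)
        = Real.arccos (cc * ⟪T b, ν⟫) - Real.arccos (cc * ⟪T a, ν⟫) := by
      apply intervalIntegral.integral_eq_sub_of_hasDerivAt
      · intro x hx
        exact hG x (hsub (by rwa [huIcc] at hx))
      · exact hDint
    calc |Real.arccos (cc * ⟪T b, ν⟫) - Real.arccos (cc * ⟪T a, ν⟫)|
        = |∫ x in a..b, D x| := by rw [hftc]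
      _ ≤ ∫ x in a..b, |D x| := intervalIntegral.abs_integral_le_integral_abs hab
      _ ≤ ∫ x in a..b, ‖deriv T x‖ := by
          apply intervalIntegral.integral_mono_on hab hDint.abs hnormint
          intro x hx; exact hDb x (hsub hx)
  have hlim : Tendsto (fun ε : ℝ =>
      |Real.arccos ((1-ε) * ⟪T b, ν⟫) - Real.arccos ((1-ε) * ⟪T a, ν⟫)|)
      (nhdsWithin 0 (Ioi 0)) (nhds |Real.arccos ⟪T b, ν⟫ - Real.arccos ⟪T a, ν⟫|) := by
    have hc : Continuous fun ε : ℝ =>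
        |Real.arccos ((1-ε) * ⟪T b, ν⟫) - Real.arccos ((1-ε) * ⟪T a, ν⟫)| := by
      apply Continuous.abs
      apply Continuous.sub
      · exact Real.continuous_arccos.comp (((continuous_const.sub continuous_id).mul continuous_const))
      · exact Real.continuous_arccos.comp (((continuous_const.sub continuous_id).mul continuous_const))
    have h0 := hc.tendsto 0
    simp only [sub_zero, one_mul] at h0
    exact h0.mono_left nhdsWithin_le_nhds
  apply le_of_tendsto hlim
  filter_upwards [Ioo_mem_nhdsGT_of_mem (Set.mem_Ico.mpr ⟨le_rfl, one_pos⟩)] with ε hε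
  exact step ε hε

/-- energy lower bound `E(γ) ≥ π²/L₀` for curves meeting a hyperplane
orthogonally at both endpoints (Proposition 4.14, flat case). -/
theorem statement15
    (n : ℕ) (hn : 2 ≤ n)
    (ν : EuclideanSpace ℝ (Fin n)) (hν : ‖ν‖ = 1) (c : ℝ)
    (L₀ : ℝ) (hL : 0 < L₀)
    (γ : ℝ → EuclideanSpace ℝ (Fin n))
    (hγ : ContDiff ℝ 2 γ)
    (himm : ∀ x ∈ Icc (-1:ℝ) 1, deriv γ x ≠ 0)
    (hlen : elL γ = L₀)
    (hbm : ⟪γ (-1), ν⟫ = c) (hbp : ⟪γ 1, ν⟫ = c)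
    (htm : ∃ r : ℝ, utang γ (-1) = r • ν)
    (htp : ∃ r : ℝ, utang γ 1 = r • ν) :
    Real.pi ^ 2 / L₀ ≤ elE γ := by
  -- setup
  classical
  have huIcc : uIcc (-1:ℝ) 1 = Icc (-1:ℝ) 1 := uIcc_of_le (by norm_num)
  have hγ2 : ContDiff ℝ ((1:ℕ) + 1) γ := by exact_mod_cast hγ
  have hd1 : ContDiff ℝ 1 (deriv γ) := (contDiff_succ_iff_deriv.mp hγ2).2.2
  set U : Set ℝ := {x | deriv γ x ≠ 0} with hUdef
  have hUo : IsOpen U := isOpen_compl_singleton.preimage hd1.continuous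
  have hsub : Icc (-1:ℝ) 1 ⊆ U := fun x hx => himm x hx
  have hTcd : ContDiffOn ℝ 1 (utang γ) U := by
    have hdOn : ContDiffOn ℝ 1 (deriv γ) U := hd1.contDiffOn
    exact ((hdOn.norm ℝ (fun x hx => hx)).inv
      (fun x hx => norm_ne_zero_iff.mpr hx)).smul hdOn
  have hTnorm : ∀ x ∈ U, ‖utang γ x‖ = 1 := by
    intro x hx
    have h0 : deriv γ x ≠ 0 := hx
    simp [utang, aderiv, norm_smul, inv_mul_cancel₀ (norm_ne_zero_iff.mpr h0)]
  have hT'c : ContinuousOn (deriv (utang γ)) U :=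
    hTcd.continuousOn_deriv_of_isOpen hUo le_rfl
  have hm1U : (-1:ℝ) ∈ U := himm (-1) ⟨le_rfl, by norm_num⟩
  have hp1U : (1:ℝ) ∈ U := himm 1 ⟨by norm_num, le_rfl⟩
  -- boundary inner products are ±1
  have hb : ∀ x ∈ U, ∀ r : ℝ, utang γ x = r • ν →
      ⟪utang γ x, ν⟫ = 1 ∨ ⟪utang γ x, ν⟫ = -1 := by
    intro x hxU r hr
    have h1 : ‖utang γ x‖ = 1 := hTnorm x hxU
    rw [hr, norm_smul, hν, mul_one, Real.norm_eq_abs] at h1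
    have h2 : ⟪utang γ x, ν⟫ = r := by
      rw [hr, real_inner_smul_left, real_inner_self_eq_norm_sq, hν]; norm_num
    rcases (abs_eq (by norm_num : (0:ℝ) ≤ 1)).mp h1 with h | h
    · left; rw [h2, h]
    · right; rw [h2, h]
  obtain ⟨rm, hrm⟩ := htm
  obtain ⟨rp, hrp⟩ := htp
  have hvm := hb (-1) hm1U rm hrm
  have hvp := hb 1 hp1U rp hrp
  -- the tangential component integrates to zero
  have hzero : ∫ x in (-1:ℝ)..1, ⟪utang γ x, ν⟫ * ‖deriv γ x‖ = 0 := by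
    have hcong : EqOn (fun x => ⟪utang γ x, ν⟫ * ‖deriv γ x‖)
        (fun x => ⟪deriv γ x, ν⟫) (uIcc (-1:ℝ) 1) := by
      intro x hx
      have hxU : deriv γ x ≠ 0 := himm x (by rwa [huIcc] at hx)
      have hn0 : ‖deriv γ x‖ ≠ 0 := norm_ne_zero_iff.mpr hxU
      simp only [utang, aderiv, real_inner_smul_left]
      field_simp
    rw [intervalIntegral.integral_congr hcong]
    have hderiv : ∀ x ∈ uIcc (-1:ℝ) 1,
        HasDerivAt (fun y => ⟪γ y, ν⟫) ⟪deriv γ x, ν⟫ x := by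
      intro x _
      have hgd : HasDerivAt γ (deriv γ x) x :=
        ((hγ.differentiable (by norm_num)) x).hasDerivAt
      simpa using hgd.inner ℝ (hasDerivAt_const x ν)
    have hint : IntervalIntegrable (fun x => ⟪deriv γ x, ν⟫) volume (-1) 1 :=
      (hd1.continuous.inner continuous_const).intervalIntegrable _ _
    rw [intervalIntegral.integral_eq_sub_of_hasDerivAt hderiv hint, hbp, hbm, sub_self]
  -- integrability of the tangent-derivative norm on subintervals
  have hKint : ∀ a b : ℝ, a ≤ b → Icc a b ⊆ Icc (-1:ℝ) 1 →
      IntervalIntegrable (fun x => ‖deriv (utang γ) x‖) volume a b := by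
    intro a b hab hs
    apply ContinuousOn.intervalIntegrable
    rw [uIcc_of_le hab]
    exact (hT'c.norm.mono (hs.trans hsub))
  -- main angle estimate : total curvature ≥ π
  have hπ : Real.pi ≤ ∫ x in (-1:ℝ)..1, ‖deriv (utang γ) x‖ := by
    have hvcont : ContinuousOn (fun x => ⟪utang γ x, ν⟫) (Icc (-1:ℝ) 1) :=
      (hTcd.continuousOn.inner continuousOn_const).mono hsub
    have hAB := angle_bound hUo hTcd hTnorm hν (by norm_num : (-1:ℝ) ≤ 1) hsub
    rcases hvm with hvm | hvm <;> rcases hvp with hvp | hvp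
    · -- v(-1) = 1, v(1) = 1 : find a point where v ≤ 0
      obtain ⟨m, hmIcc, hm0⟩ : ∃ m ∈ Icc (-1:ℝ) 1, ⟪utang γ m, ν⟫ ≤ 0 := by
        by_contra hcon
        push_neg at hcon
        have hpos : 0 < ∫ x in (-1:ℝ)..1, ⟪utang γ x, ν⟫ * ‖deriv γ x‖ := by
          apply intervalIntegral.intervalIntegral_pos_of_pos_on
          · apply ContinuousOn.intervalIntegrable
            rw [huIcc]
            exact hvcont.mul hd1.continuous.norm.continuousOn
          · intro x hx
            exact mul_pos (hcon x (Ioo_subset_Icc_self hx))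
              (norm_pos_iff.mpr (himm x (Ioo_subset_Icc_self hx)))
          · norm_num
        rw [hzero] at hpos
        exact lt_irrefl 0 hpos
      have hθ : Real.pi / 2 ≤ Real.arccos ⟪utang γ m, ν⟫ := by
        rw [Real.arccos]
        have := Real.arcsin_nonpos.mpr hm0
        linarith
      have h1 := angle_bound hUo hTcd hTnorm hν hmIcc.1
        ((Icc_subset_Icc le_rfl hmIcc.2).trans hsub)
      have h2 := angle_bound hUo hTcd hTnorm hν hmIcc.2
        ((Icc_subset_Icc hmIcc.1 le_rfl).trans hsub)
      rw [hvm, Real.arccos_one, sub_zero,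
        abs_of_nonneg (Real.arccos_nonneg _)] at h1
      rw [hvp, Real.arccos_one, zero_sub, abs_neg,
        abs_of_nonneg (Real.arccos_nonneg _)] at h2
      have hadd := intervalIntegral.integral_add_adjacent_intervals
        (hKint (-1) m hmIcc.1 (Icc_subset_Icc le_rfl hmIcc.2))
        (hKint m 1 hmIcc.2 (Icc_subset_Icc hmIcc.1 le_rfl))
      rw [← hadd]
      linarith
    · -- v(-1) = 1, v(1) = -1
      rw [hvp, hvm, Real.arccos_neg_one, Real.arccos_one, sub_zero,
        abs_of_nonneg Real.pi_pos.le] at hAB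
      exact hAB
    · -- v(-1) = -1, v(1) = 1
      rw [hvp, hvm, Real.arccos_neg_one, Real.arccos_one, zero_sub, abs_neg,
        abs_of_nonneg Real.pi_pos.le] at hAB
      exact hAB
    · -- v(-1) = -1, v(1) = -1 : find a point where v ≥ 0
      obtain ⟨m, hmIcc, hm0⟩ : ∃ m ∈ Icc (-1:ℝ) 1, 0 ≤ ⟪utang γ m, ν⟫ := by
        by_contra hcon
        push_neg at hcon
        have hpos : 0 < ∫ x in (-1:ℝ)..1, -(⟪utang γ x, ν⟫ * ‖deriv γ x‖) := by
          apply intervalIntegral.intervalIntegral_pos_of_pos_on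
          · apply IntervalIntegrable.neg
            apply ContinuousOn.intervalIntegrable
            rw [huIcc]
            exact hvcont.mul hd1.continuous.norm.continuousOn
          · intro x hx
            have := mul_pos (neg_pos.mpr (hcon x (Ioo_subset_Icc_self hx)))
              (norm_pos_iff.mpr (himm x (Ioo_subset_Icc_self hx)))
            simpa [neg_mul] using this
          · norm_num
        rw [intervalIntegral.integral_neg, hzero, neg_zero] at hpos
        exact lt_irrefl 0 hpos
      have hθ : Real.arccos ⟪utang γ m, ν⟫ ≤ Real.pi / 2 :=
        Real.arccos_le_pi_div_two.mpr hm0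
      have h1 := angle_bound hUo hTcd hTnorm hν hmIcc.1
        ((Icc_subset_Icc le_rfl hmIcc.2).trans hsub)
      have h2 := angle_bound hUo hTcd hTnorm hν hmIcc.2
        ((Icc_subset_Icc hmIcc.1 le_rfl).trans hsub)
      have hmpi := Real.arccos_le_pi ⟪utang γ m, ν⟫
      rw [hvm, Real.arccos_neg_one] at h1
      rw [hvp, Real.arccos_neg_one] at h2
      rw [abs_of_nonpos (by linarith)] at h1
      rw [abs_of_nonneg (by linarith)] at h2
      have hadd := intervalIntegral.integral_add_adjacent_intervals
        (hKint (-1) m hmIcc.1 (Icc_subset_Icc le_rfl hmIcc.2))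
        (hKint m 1 hmIcc.2 (Icc_subset_Icc hmIcc.1 le_rfl))
      rw [← hadd]
      linarith
  -- Cauchy-Schwarz step
  set F : ℝ → ℝ := fun x => ‖deriv (utang γ) x‖ with hF
  set f : ℝ → ℝ := fun x => F x * (Real.sqrt ‖deriv γ x‖)⁻¹ with hf
  set g : ℝ → ℝ := fun x => Real.sqrt ‖deriv γ x‖ with hg
  have hgpos : ∀ x ∈ Icc (-1:ℝ) 1, 0 < Real.sqrt ‖deriv γ x‖ := by
    intro x hx
    exact Real.sqrt_pos.mpr (norm_pos_iff.mpr (himm x hx))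
  have hgc : ContinuousOn g (Icc (-1:ℝ) 1) :=
    Real.continuous_sqrt.comp_continuousOn hd1.continuous.norm.continuousOn
  have hfc : ContinuousOn f (Icc (-1:ℝ) 1) :=
    ((hT'c.norm.mono hsub)).mul (hgc.inv₀ (fun x hx => (hgpos x hx).ne'))
  have hcs := cs_aux hfc hgc
  have hfg : ∫ x in (-1:ℝ)..1, f x * g x = ∫ x in (-1:ℝ)..1, F x := by
    apply intervalIntegral.integral_congr
    intro x hx
    have h0 := hgpos x (by rwa [huIcc] at hx)
    simp only [hf, hg]
    field_simp
  have hf2 : ∫ x in (-1:ℝ)..1, f x ^ 2 = elE γ := by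
    apply intervalIntegral.integral_congr
    intro x hx
    have hx' : x ∈ Icc (-1:ℝ) 1 := by rwa [huIcc] at hx
    have h0 : deriv γ x ≠ 0 := himm x hx'
    have hn0 : (0:ℝ) < ‖deriv γ x‖ := norm_pos_iff.mpr h0
    have hcv : ‖curvV γ x‖ = ‖deriv γ x‖⁻¹ * F x := by
      simp [curvV, aderiv, norm_smul, hF]
    simp only [hf]
    rw [mul_pow, hcv, mul_pow, ← Real.sqrt_inv, Real.sq_sqrt (inv_nonneg.mpr hn0.le)]
    field_simp
  have hg2 : ∫ x in (-1:ℝ)..1, g x ^ 2 = L₀ := by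
    rw [← hlen]
    apply intervalIntegral.integral_congr
    intro x _
    simp [hg, Real.sq_sqrt (norm_nonneg _)]
  rw [hfg, hf2, hg2] at hcs
  have hπ2 : Real.pi ^ 2 ≤ (∫ x in (-1:ℝ)..1, F x) ^ 2 :=
    pow_le_pow_left₀ Real.pi_pos.le hπ 2
  rw [div_le_iff₀ hL]
  calc Real.pi ^ 2 ≤ (∫ x in (-1:ℝ)..1, F x) ^ 2 := hπ2
    _ ≤ elE γ * L₀ := hcs


end
end

section
/- Let n ≥ 2, let ν ∈ ℝⁿ with |ν| = 1, c ∈ ℝ, and let H = {x ∈ ℝⁿ : ⟨x, ν⟩ = c} be an affine hyperplane. For every L₀ > 0 and E₀ > 0 there exists ζ > 0 such that every twice continuously differentiable immersion γ: [-1,1] → ℝⁿ with L(γ) = L₀, E(γ) ≤ E₀, γ(−1), γ(1) ∈ H, and unit tangents ∂_sγ(±1) parallel to ν satisfies L₀ − |γ(1) − γ(−1)| ≥ ζ. -/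
open Set MeasureTheory Filter
open scoped RealInnerProductSpace

noncomputable section

variable {n : ℕ}

/-- Bessel-type inequality for two orthonormal vectors. -/
lemma bessel_two {E : Type*} [NormedAddCommGroup E] [InnerProductSpace ℝ E]
    (T e f : E) (he : ‖e‖ = 1) (hf : ‖f‖ = 1) (hef : ⟪e, f⟫ = 0) :
    ⟪T, e⟫ ^ 2 + ⟪T, f⟫ ^ 2 ≤ ‖T‖ ^ 2 := by
  have h : (0:ℝ) ≤ ⟪T - (⟪T,e⟫ • e + ⟪T,f⟫ • f), T - (⟪T,e⟫ • e + ⟪T,f⟫ • f)⟫ :=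
    real_inner_self_nonneg
  have h1 : ⟪e,e⟫ = (1:ℝ) := by rw [real_inner_self_eq_norm_sq, he]; norm_num
  have h2 : ⟪f,f⟫ = (1:ℝ) := by rw [real_inner_self_eq_norm_sq, hf]; norm_num
  have h3 : ⟪f,e⟫ = (0:ℝ) := by rw [real_inner_comm]; exact hef
  have hT : ⟪T,T⟫ = ‖T‖^2 := real_inner_self_eq_norm_sq T
  simp only [inner_sub_left, inner_sub_right, inner_add_left, inner_add_right,
    real_inner_smul_left, real_inner_smul_right, h1, h2, h3, hef, hT,
    real_inner_comm T e, real_inner_comm T f] at h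
  nlinarith [h]

set_option maxHeartbeats 2000000 in
/-- uniform non-flatness for curves of fixed length and bounded energy
meeting a hyperplane orthogonally at both endpoints. -/
theorem statement16
    (n : ℕ) (hn : 2 ≤ n)
    (ν : EuclideanSpace ℝ (Fin n)) (hν : ‖ν‖ = 1) (c : ℝ)
    (L₀ E₀ : ℝ) (hL : 0 < L₀) (hE : 0 < E₀) :
    ∃ ζ : ℝ, 0 < ζ ∧
      ∀ γ : ℝ → EuclideanSpace ℝ (Fin n),
        ContDiff ℝ 2 γ →
        (∀ x ∈ Icc (-1:ℝ) 1, deriv γ x ≠ 0) →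
        elL γ = L₀ → elE γ ≤ E₀ →
        ⟪γ (-1), ν⟫ = c → ⟪γ 1, ν⟫ = c →
        (∃ r : ℝ, utang γ (-1) = r • ν) →
        (∃ r : ℝ, utang γ 1 = r • ν) →
        ζ ≤ L₀ - ‖γ 1 - γ (-1)‖ := by
  classical
  set ℓ : ℝ := min L₀ ((4*E₀)⁻¹) with hℓdef
  have hℓpos : 0 < ℓ := lt_min hL (by positivity)
  have hℓL : ℓ ≤ L₀ := min_le_left _ _
  have hℓE : ℓ ≤ (4*E₀)⁻¹ := min_le_right _ _
  refine ⟨ℓ/8, by positivity, ?_⟩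
  rintro γ hγ hreg hLγ hEγ hb1 hb2 ⟨r₁, hr₁⟩ ⟨r₂, hr₂⟩
  -- regularity of the derivative
  have hγ2 : ContDiff ℝ ((1:ℕ)+1) γ := by exact_mod_cast hγ
  have hg'1 : ContDiff ℝ 1 (deriv γ) := (contDiff_succ_iff_deriv.mp hγ2).2.2
  have hg'c : Continuous (deriv γ) := hg'1.continuous
  set U : Set ℝ := {x | deriv γ x ≠ 0} with hUdef
  have hUopen : IsOpen U := isOpen_compl_singleton.preimage hg'c
  have hIU : Icc (-1:ℝ) 1 ⊆ U := hreg
  -- unit tangent: regularity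
  have hTcd : ∀ x ∈ U, ContDiffAt ℝ 1 (utang γ) x := by
    intro x hx
    have : ContDiffAt ℝ 1 (fun y => ‖deriv γ y‖⁻¹ • deriv γ y) x :=
      ((hg'1.contDiffAt.norm ℝ hx).inv (norm_ne_zero_iff.mpr hx)).smul hg'1.contDiffAt
    exact this
  have hTd : ∀ x ∈ U, HasDerivAt (utang γ) (deriv (utang γ) x) x := by
    intro x hx
    have hdiff : DifferentiableAt ℝ (utang γ) x := (hTcd x hx).differentiableAt one_ne_zero
    exact hdiff.hasDerivAt
  have hTnorm : ∀ x ∈ U, ‖utang γ x‖ = 1 := by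
    intro x hx
    have : deriv γ x ≠ 0 := hx
    show ‖(‖deriv γ x‖⁻¹ : ℝ) • deriv γ x‖ = 1
    rw [norm_smul, norm_inv, norm_norm, inv_mul_cancel₀ (norm_ne_zero_iff.mpr this)]
  have hκeq : ∀ x ∈ U, deriv (utang γ) x = ‖deriv γ x‖ • curvV γ x := by
    intro x hx
    have hne : ‖deriv γ x‖ ≠ 0 := norm_ne_zero_iff.mpr hx
    show deriv (utang γ) x = ‖deriv γ x‖ • (‖deriv γ x‖⁻¹ • deriv (utang γ) x)
    rw [smul_smul, mul_inv_cancel₀ hne, one_smul]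
  have hTdcont : ContinuousOn (deriv (utang γ)) U := by
    have : ContDiffOn ℝ 1 (utang γ) U := fun x hx => (hTcd x hx).contDiffWithinAt
    exact this.continuousOn_deriv_of_isOpen hUopen le_rfl
  have hκc : ContinuousOn (curvV γ) U := by
    have h1 : ContinuousOn (fun x => ‖deriv γ x‖⁻¹) U :=
      (hg'c.norm.continuousOn).inv₀ (fun x hx => norm_ne_zero_iff.mpr hx)
    exact h1.smul hTdcont
  -- the modified normal vector ν'
  set ν' : EuclideanSpace ℝ (Fin n) := r₂ • ν with hν'def
  have h1U : (1:ℝ) ∈ U := hIU (by norm_num)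
  have hr₂sq : r₂^2 = 1 := by
    have h1 : ‖utang γ 1‖ = 1 := hTnorm 1 h1U
    rw [hr₂, norm_smul, hν, mul_one] at h1
    have : |r₂| = 1 := h1
    nlinarith [sq_abs r₂, this]
  have hν'1 : ‖ν'‖ = 1 := by
    rw [hν'def, norm_smul, hν, mul_one]
    have : |r₂| = ‖r₂‖ := rfl
    nlinarith [sq_abs r₂, abs_nonneg r₂]
  have hTν' : ⟪utang γ 1, ν'⟫ = 1 := by
    rw [hr₂, hν'def, real_inner_smul_left, real_inner_smul_right,
      real_inner_self_eq_norm_sq, hν]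
    nlinarith [hr₂sq]
  -- the primitive of the speed
  set F : ℝ → ℝ := fun x => ∫ t in (-1:ℝ)..x, ‖deriv γ t‖ with hFdef
  have hspeedInt : ∀ a b : ℝ, IntervalIntegrable (fun t => ‖deriv γ t‖) volume a b :=
    fun a b => (hg'c.norm).intervalIntegrable a b
  have hFder : ∀ x : ℝ, HasDerivAt F ‖deriv γ x‖ x := by
    intro x
    exact intervalIntegral.integral_hasDerivAt_right (hspeedInt _ _)
      hg'c.norm.stronglyMeasurable.stronglyMeasurableAtFilter
      hg'c.norm.continuousAt
  have hFc : Continuous F := by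
    have : Differentiable ℝ F := fun x => (hFder x).differentiableAt
    exact this.continuous
  have hF1 : F 1 = L₀ := hLγ
  have hFm1 : F (-1) = 0 := intervalIntegral.integral_same
  -- choose x₀ by the intermediate value theorem
  obtain ⟨x₀, hx₀mem, hx₀⟩ : ∃ x₀ ∈ Icc (-1:ℝ) 1, F x₀ = L₀ - ℓ := by
    have hsub : Icc (F (-1)) (F 1) ⊆ F '' Icc (-1:ℝ) 1 :=
      intermediate_value_Icc (by norm_num) hFc.continuousOn
    have hmem : L₀ - ℓ ∈ Icc (F (-1)) (F 1) := by
      rw [hFm1, hF1]; constructor <;> linarith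
    obtain ⟨x₀, hx₀mem, hx₀⟩ := hsub hmem
    exact ⟨x₀, hx₀mem, hx₀⟩
  have hx₀l : (-1:ℝ) ≤ x₀ := hx₀mem.1
  have hx₀r : x₀ ≤ 1 := hx₀mem.2
  -- remaining length s x
  set s : ℝ → ℝ := fun x => ∫ t in x..(1:ℝ), ‖deriv γ t‖ with hsdef
  have hFs : ∀ x : ℝ, F x + s x = L₀ := by
    intro x
    rw [hsdef, hFdef]
    have := intervalIntegral.integral_add_adjacent_intervals (hspeedInt (-1) x) (hspeedInt x 1)
    rw [this]; exact hLγ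
  have hsx₀ : s x₀ = ℓ := by have := hFs x₀; rw [hx₀] at this; linarith
  have hsle : ∀ x ∈ Icc x₀ 1, s x ≤ ℓ := by
    intro x hx
    have h1 : F x₀ + (∫ t in x₀..x, ‖deriv γ t‖) = F x :=
      intervalIntegral.integral_add_adjacent_intervals (hspeedInt (-1) x₀) (hspeedInt x₀ x)
    have h2 : (0:ℝ) ≤ ∫ t in x₀..x, ‖deriv γ t‖ :=
      intervalIntegral.integral_nonneg hx.1 (fun t _ => norm_nonneg _)
    have := hFs x
    rw [hx₀] at h1
    linarith
  -- energy of the tail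
  have hEcont : ContinuousOn (fun t => ‖curvV γ t‖^2 * ‖deriv γ t‖) (Icc (-1:ℝ) 1) :=
    (((hκc.mono hIU).norm.pow 2).mul hg'c.norm.continuousOn)
  have hEint : ∀ a b : ℝ, a ∈ Icc (-1:ℝ) 1 → b ∈ Icc (-1:ℝ) 1 →
      IntervalIntegrable (fun t => ‖curvV γ t‖^2 * ‖deriv γ t‖) volume a b := by
    intro a b ha hb
    exact (hEcont.mono (uIcc_subset_Icc ha hb)).intervalIntegrable
  have hEtail : ∀ x ∈ Icc (-1:ℝ) 1,
      (∫ t in x..(1:ℝ), ‖curvV γ t‖^2 * ‖deriv γ t‖) ≤ E₀ := by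
    intro x hx
    have hsplit := intervalIntegral.integral_add_adjacent_intervals
      (hEint (-1) x (by norm_num) hx) (hEint x 1 hx (by norm_num))
    have hnn : (0:ℝ) ≤ ∫ t in (-1:ℝ)..x, ‖curvV γ t‖^2 * ‖deriv γ t‖ :=
      intervalIntegral.integral_nonneg hx.1 (fun t _ => by positivity)
    have : (∫ t in (-1:ℝ)..1, ‖curvV γ t‖^2 * ‖deriv γ t‖) ≤ E₀ := hEγ
    linarith [hsplit ▸ this]
  -- key tangent estimate
  have key1 : ∀ x ∈ Icc x₀ 1, (1:ℝ)/2 ≤ ⟪utang γ x, ν'⟫ := by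
    intro x hx
    have hxI : Icc x 1 ⊆ Icc (-1:ℝ) 1 := Icc_subset_Icc (le_trans hx₀l hx.1) le_rfl
    have hxU : Icc x 1 ⊆ U := hxI.trans hIU
    have huicc : uIcc x 1 = Icc x 1 := uIcc_of_le hx.2
    -- FTC
    have hFTC : (∫ t in x..(1:ℝ), ⟪deriv (utang γ) t, ν'⟫)
        = ⟪utang γ 1, ν'⟫ - ⟪utang γ x, ν'⟫ := by
      apply intervalIntegral.integral_eq_sub_of_hasDerivAt
        (f := fun y => ⟪utang γ y, ν'⟫) (f' := fun t => ⟪deriv (utang γ) t, ν'⟫)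
      · intro t ht
        rw [huicc] at ht
        have h := HasDerivAt.inner ℝ (hTd t (hxU ht)) (hasDerivAt_const t ν')
        simpa using h
      · apply ContinuousOn.intervalIntegrable
        rw [huicc]
        exact (hTdcont.mono hxU).inner continuousOn_const
    -- pointwise bound with Young's inequality
    have hpt : ∀ t ∈ Icc x 1, ⟪deriv (utang γ) t, ν'⟫
        ≤ (2*E₀)⁻¹/2 * (‖curvV γ t‖^2 * ‖deriv γ t‖) + (2*E₀)/2 * ‖deriv γ t‖ := by
      intro t ht
      have htU : t ∈ U := hxU ht
      have h1 : ⟪deriv (utang γ) t, ν'⟫ ≤ ‖deriv (utang γ) t‖ := by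
        calc ⟪deriv (utang γ) t, ν'⟫ ≤ ‖deriv (utang γ) t‖ * ‖ν'‖ := real_inner_le_norm _ _
        _ = ‖deriv (utang γ) t‖ := by rw [hν'1, mul_one]
      have h2 : ‖deriv (utang γ) t‖ = ‖deriv γ t‖ * ‖curvV γ t‖ := by
        rw [hκeq t htU, norm_smul, norm_norm]
      have hq : (0:ℝ) ≤ ‖deriv γ t‖ := norm_nonneg _
      have hp : (0:ℝ) ≤ ‖curvV γ t‖ := norm_nonneg _
      have hyoung : ‖deriv γ t‖ * ‖curvV γ t‖
          ≤ (2*E₀)⁻¹/2 * (‖curvV γ t‖^2 * ‖deriv γ t‖) + (2*E₀)/2 * ‖deriv γ t‖ := by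
        rw [← sub_nonneg]
        have hsub : (2*E₀)⁻¹/2 * (‖curvV γ t‖^2 * ‖deriv γ t‖) + (2*E₀)/2 * ‖deriv γ t‖
            - ‖deriv γ t‖ * ‖curvV γ t‖
            = ‖deriv γ t‖ * ((2*E₀)⁻¹ * ‖curvV γ t‖ - 1)^2 * E₀ := by
          field_simp
          ring
        rw [hsub]
        positivity
      have h1' : ⟪deriv (utang γ) t, ν'⟫ ≤ ‖deriv γ t‖ * ‖curvV γ t‖ := by
        rw [← h2]; exact h1
      linarith [h1', hyoung]
    -- integrate
    have hint1 : IntervalIntegrable (fun t => ⟪deriv (utang γ) t, ν'⟫) volume x 1 := by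
      apply ContinuousOn.intervalIntegrable
      rw [huicc]; exact (hTdcont.mono hxU).inner continuousOn_const
    have hint2 : IntervalIntegrable
        (fun t => (2*E₀)⁻¹/2 * (‖curvV γ t‖^2 * ‖deriv γ t‖) + (2*E₀)/2 * ‖deriv γ t‖)
        volume x 1 := by
      apply IntervalIntegrable.add
      · exact (hEint x 1 (hxI ⟨le_rfl, hx.2⟩) (by norm_num)).const_mul _
      · exact (hspeedInt x 1).const_mul _
    have hmono := intervalIntegral.integral_mono_on hx.2 hint1 hint2 hpt
    have hsplit : (∫ t in x..(1:ℝ),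
          ((2*E₀)⁻¹/2 * (‖curvV γ t‖^2 * ‖deriv γ t‖) + (2*E₀)/2 * ‖deriv γ t‖))
        = (2*E₀)⁻¹/2 * (∫ t in x..(1:ℝ), ‖curvV γ t‖^2 * ‖deriv γ t‖)
          + (2*E₀)/2 * s x := by
      rw [intervalIntegral.integral_add
        ((hEint x 1 (hxI ⟨le_rfl, hx.2⟩) (by norm_num)).const_mul _)
        ((hspeedInt x 1).const_mul _),
        intervalIntegral.integral_const_mul, intervalIntegral.integral_const_mul]
    have hEt : (∫ t in x..(1:ℝ), ‖curvV γ t‖^2 * ‖deriv γ t‖) ≤ E₀ :=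
      hEtail x (hxI ⟨le_rfl, hx.2⟩)
    have hsx : s x ≤ ℓ := hsle x hx
    have hEnn : (0:ℝ) ≤ (2*E₀)⁻¹/2 := by positivity
    have hb1' : (2*E₀)⁻¹/2 * (∫ t in x..(1:ℝ), ‖curvV γ t‖^2 * ‖deriv γ t‖)
        ≤ (2*E₀)⁻¹/2 * E₀ := by
      exact mul_le_mul_of_nonneg_left hEt hEnn
    have hc1 : (2*E₀)⁻¹/2 * E₀ = 1/4 := by field_simp; ring
    have hb2' : (2*E₀)/2 * s x ≤ (2*E₀)/2 * (4*E₀)⁻¹ := by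
      apply mul_le_mul_of_nonneg_left (le_trans hsx hℓE) (by positivity)
    have hc2 : (2*E₀)/2 * (4*E₀)⁻¹ = 1/4 := by field_simp
    have : ⟪utang γ 1, ν'⟫ - ⟪utang γ x, ν'⟫ ≤ 1/2 := by
      rw [← hFTC]
      calc (∫ t in x..(1:ℝ), ⟪deriv (utang γ) t, ν'⟫)
          ≤ (2*E₀)⁻¹/2 * (∫ t in x..(1:ℝ), ‖curvV γ t‖^2 * ‖deriv γ t‖)
              + (2*E₀)/2 * s x := le_of_le_of_eq hmono hsplit
        _ ≤ 1/4 + 1/4 := by linarith [hb1', hb2', hc1 ▸ hb1', hc2 ▸ hb2']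
        _ = 1/2 := by norm_num
    rw [hTν'] at this
    linarith
  -- the chord
  set d : EuclideanSpace ℝ (Fin n) := γ 1 - γ (-1) with hddef
  have hdν' : ⟪d, ν'⟫ = 0 := by
    rw [hddef, hν'def, real_inner_smul_right, inner_sub_left, hb1, hb2]
    ring
  rcases eq_or_ne d 0 with hd0 | hdne
  · rw [hd0]
    simp only [norm_zero]
    linarith
  · set e : EuclideanSpace ℝ (Fin n) := ‖d‖⁻¹ • d with hedef
    have hdn : ‖d‖ ≠ 0 := norm_ne_zero_iff.mpr hdne
    have he1 : ‖e‖ = 1 := by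
      rw [hedef, norm_smul, norm_inv, norm_norm, inv_mul_cancel₀ hdn]
    have heν' : ⟪e, ν'⟫ = 0 := by
      rw [hedef, real_inner_smul_left, hdν', mul_zero]
    have hde : ⟪d, e⟫ = ‖d‖ := by
      rw [hedef, real_inner_smul_right, real_inner_self_eq_norm_sq]
      field_simp
    -- FTC for γ
    have hFTCγ : (∫ t in (-1:ℝ)..1, deriv γ t) = γ 1 - γ (-1) := by
      apply intervalIntegral.integral_deriv_eq_sub
      · intro t _
        exact (hγ.differentiable (by norm_num)).differentiableAt
      · exact hg'c.intervalIntegrable _ _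
    have hinner : (∫ t in (-1:ℝ)..1, ⟪deriv γ t, e⟫) = ‖d‖ := by
      have hcomm := (innerSL ℝ e).intervalIntegral_comp_comm
        (hg'c.intervalIntegrable (μ := volume) (-1) 1)
      simp only [innerSL_apply_apply] at hcomm
      have : (∫ t in (-1:ℝ)..1, ⟪e, deriv γ t⟫) = ⟪e, d⟫ := by
        rw [hcomm, hFTCγ, ← hddef]
      calc (∫ t in (-1:ℝ)..1, ⟪deriv γ t, e⟫)
          = (∫ t in (-1:ℝ)..1, ⟪e, deriv γ t⟫) := by
            congr 1; ext t; rw [real_inner_comm]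
        _ = ⟪e, d⟫ := this
        _ = ⟪d, e⟫ := real_inner_comm _ _
        _ = ‖d‖ := hde
    have hgeInt : ∀ a b : ℝ, IntervalIntegrable (fun t => ⟪deriv γ t, e⟫) volume a b :=
      fun a b => (hg'c.inner continuous_const).intervalIntegrable a b
    have hintegrand : ∀ a b : ℝ,
        IntervalIntegrable (fun t => ‖deriv γ t‖ - ⟪deriv γ t, e⟫) volume a b :=
      fun a b => (hspeedInt a b).sub (hgeInt a b)
    have hmain : L₀ - ‖d‖ = ∫ t in (-1:ℝ)..1, (‖deriv γ t‖ - ⟪deriv γ t, e⟫) := by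
      rw [intervalIntegral.integral_sub (hspeedInt _ _) (hgeInt _ _), hinner]
      have : (∫ t in (-1:ℝ)..1, ‖deriv γ t‖) = L₀ := hLγ
      rw [this]
    have hsplit2 : (∫ t in (-1:ℝ)..1, (‖deriv γ t‖ - ⟪deriv γ t, e⟫))
        = (∫ t in (-1:ℝ)..x₀, (‖deriv γ t‖ - ⟪deriv γ t, e⟫))
          + ∫ t in x₀..(1:ℝ), (‖deriv γ t‖ - ⟪deriv γ t, e⟫) :=
      (intervalIntegral.integral_add_adjacent_intervals
        (hintegrand _ _) (hintegrand _ _)).symm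
    have hfirst : (0:ℝ) ≤ ∫ t in (-1:ℝ)..x₀, (‖deriv γ t‖ - ⟪deriv γ t, e⟫) := by
      apply intervalIntegral.integral_nonneg hx₀l
      intro t _
      have := real_inner_le_norm (deriv γ t) e
      rw [he1, mul_one] at this
      linarith
    have hsecond : ℓ/8 ≤ ∫ t in x₀..(1:ℝ), (‖deriv γ t‖ - ⟪deriv γ t, e⟫) := by
      have hpt2 : ∀ t ∈ Icc x₀ 1, 1/8 * ‖deriv γ t‖ ≤ ‖deriv γ t‖ - ⟪deriv γ t, e⟫ := by
        intro t ht
        have htU : t ∈ U := hIU (Icc_subset_Icc (le_trans (by norm_num) hx₀l) le_rfl ht)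
        have ha : (1:ℝ)/2 ≤ ⟪utang γ t, ν'⟫ := key1 t ht
        have hbes := bessel_two (utang γ t) e ν' he1 hν'1 heν'
        rw [hTnorm t htU] at hbes
        have hb : ⟪utang γ t, e⟫ ≤ 1 := by nlinarith [hbes, ha]
        have hkey : (1:ℝ)/8 ≤ 1 - ⟪utang γ t, e⟫ := by nlinarith [hbes, ha, hb]
        have hrepr : ⟪deriv γ t, e⟫ = ‖deriv γ t‖ * ⟪utang γ t, e⟫ := by
          have : deriv γ t = ‖deriv γ t‖ • utang γ t := by
            show deriv γ t = ‖deriv γ t‖ • (‖deriv γ t‖⁻¹ • deriv γ t)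
            rw [smul_smul, mul_inv_cancel₀ (norm_ne_zero_iff.mpr htU), one_smul]
          conv_lhs => rw [this]
          rw [real_inner_smul_left]
        rw [hrepr]
        nlinarith [norm_nonneg (deriv γ t), hkey]
      have hint3 : IntervalIntegrable (fun t => 1/8 * ‖deriv γ t‖) volume x₀ 1 :=
        (hspeedInt x₀ 1).const_mul _
      have := intervalIntegral.integral_mono_on hx₀r hint3 (hintegrand x₀ 1) hpt2
      rw [intervalIntegral.integral_const_mul] at this
      have hsx : (∫ t in x₀..(1:ℝ), ‖deriv γ t‖) = ℓ := hsx₀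
      rw [hsx] at this
      linarith
    linarith [hmain, hsplit2, hfirst, hsecond]

end
end

section
/- Let γ = (γ¹, γ²): [-1,1] → ℝ² be a smooth immersion with γ²(±1) = 0 and ∂_xγ¹(±1) = 0, and let m ∈ ℕ. Then the reflection Rγ: S¹ → ℝ² is 2m-times continuously differentiable on S¹ (equivalently, Rγ ∈ W^{2m+1,∞}(S¹), i.e. Rγ is C^{2m} with Lipschitz continuous 2m-th derivative) if and only if ∂_x^{2k}γ²(±1) = 0 and ∂_x^{2k−1}γ¹(±1) = 0 for all 1 ≤ k ≤ m. -/
open Set MeasureTheory Filter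
open scoped RealInnerProductSpace

noncomputable section

variable {n : ℕ}

/-- Reflection of the plane across the x-axis `M = ℝ×{0}`. -/
def reflP (v : EuclideanSpace ℝ (Fin 2)) : EuclideanSpace ℝ (Fin 2) :=
  WithLp.toLp 2 (fun i => if i = 0 then v i else -(v i))

/-- The representative in `[-1, 3)` of `x` modulo `4` (identifying `S¹ = ℝ/4ℤ`). -/
def wrap4 (x : ℝ) : ℝ := 4 * Int.fract ((x + 1) / 4) - 1

/-- The reflected closed curve `Rγ : S¹ = ℝ/4ℤ → ℝ²`, realized as the 4-periodic map
with `Rγ(x) = γ(x)` on `[-1,1]` and `Rγ(x) = Pγ(2−x)` on `[1,3]`. -/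
def reflCurve (γ : ℝ → EuclideanSpace ℝ (Fin 2)) : ℝ → EuclideanSpace ℝ (Fin 2) :=
  fun x => if wrap4 x ≤ 1 then γ (wrap4 x) else reflP (γ (2 - wrap4 x))

section Aux17
open Topology
set_option linter.unusedSectionVars false

variable {E : Type*} [NormedAddCommGroup E] [NormedSpace ℝ E]

/-- two-piece gluing -/
def hp (f g : ℝ → E) (a : ℝ) : ℝ → E := fun x => if x ≤ a then f x else g x

lemma hp_eventuallyEq_left {f g : ℝ → E} {a x : ℝ} (hx : x < a) : hp f g a =ᶠ[𝓝 x] f := by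
  filter_upwards [Iio_mem_nhds hx] with z (hz : z < a)
  simp [hp, hz.le]

lemma hp_eventuallyEq_right {f g : ℝ → E} {a x : ℝ} (hx : a < x) : hp f g a =ᶠ[𝓝 x] g := by
  filter_upwards [Ioi_mem_nhds hx] with z (hz : a < z)
  simp [hp, not_le.2 hz]

lemma hp_hasDerivAt {f g : ℝ → E} {a : ℝ} {d : E} (hf : HasDerivAt f d a)
    (hg : HasDerivAt g d a) (h0 : f a = g a) : HasDerivAt (hp f g a) d a := by
  rw [hasDerivAt_iff_tendsto_slope] at hf hg ⊢
  rw [← nhdsLT_sup_nhdsGT, tendsto_sup]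
  constructor
  · refine (hf.mono_left (nhdsWithin_mono a fun z hz => ne_of_lt hz)).congr'  ?_
    filter_upwards [self_mem_nhdsWithin] with z (hz : z < a)
    simp [slope_def_module, hp, hz.le]
  · refine (hg.mono_left (nhdsWithin_mono a fun z hz => (ne_of_gt hz))).congr' ?_
    filter_upwards [self_mem_nhdsWithin] with z (hz : a < z)
    simp [slope_def_module, hp, not_le.2 hz, h0]

set_option linter.unusedSectionVars false

lemma hp_differentiable {f g : ℝ → E} {a : ℝ} (hf : Differentiable ℝ f)
    (hg : Differentiable ℝ g) (h0 : f a = g a) (h1 : deriv f a = deriv g a) :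
    Differentiable ℝ (hp f g a) := by
  intro x
  rcases lt_trichotomy x a with hx | hx | hx
  · exact (hf x).congr_of_eventuallyEq (hp_eventuallyEq_left hx)
  · subst hx
    exact (hp_hasDerivAt (hf x).hasDerivAt (h1 ▸ (hg x).hasDerivAt) h0).differentiableAt
  · exact (hg x).congr_of_eventuallyEq (hp_eventuallyEq_right hx)

lemma hp_deriv {f g : ℝ → E} {a : ℝ} (hf : Differentiable ℝ f)
    (hg : Differentiable ℝ g) (h0 : f a = g a) (h1 : deriv f a = deriv g a) :
    deriv (hp f g a) = hp (deriv f) (deriv g) a := by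
  funext x
  rcases lt_trichotomy x a with hx | hx | hx
  · rw [(hp_eventuallyEq_left hx).deriv_eq]
    simp [hp, hx.le]
  · subst hx
    rw [(hp_hasDerivAt (hf x).hasDerivAt (h1 ▸ (hg x).hasDerivAt) h0).deriv]
    simp [hp]
  · rw [(hp_eventuallyEq_right hx).deriv_eq]
    simp [hp, not_le.2 hx]

lemma hp_continuous {f g : ℝ → E} {a : ℝ} (hf : Continuous f) (hg : Continuous g)
    (h0 : f a = g a) : Continuous (hp f g a) := by
  exact Continuous.if_le hf hg continuous_id continuous_const (fun x hx => by rw [hx]; exact h0)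

lemma hp_contDiff : ∀ (N : ℕ) (f g : ℝ → E) (a : ℝ), ContDiff ℝ (⊤ : ℕ∞) f →
    ContDiff ℝ (⊤ : ℕ∞) g → (∀ j ≤ N, iteratedDeriv j f a = iteratedDeriv j g a) →
    ContDiff ℝ (N : ℕ∞) (hp f g a) := by
  intro N
  induction N with
  | zero =>
    intro f g a hf hg h
    have h0 : f a = g a := by simpa using h 0 le_rfl
    exact contDiff_zero.2 (hp_continuous hf.continuous hg.continuous h0)
  | succ N ih =>
    intro f g a hf hg h
    have h0 : f a = g a := by simpa using h 0 (Nat.zero_le _)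
    have h1 : deriv f a = deriv g a := by
      simpa [iteratedDeriv_one] using h 1 (by omega)
    have hdf := hf.differentiable (by simp)
    have hdg := hg.differentiable (by simp)
    have key : ContDiff ℝ ((N : ℕ∞) : WithTop ℕ∞) (deriv (hp f g a)) := by
      rw [hp_deriv hdf hdg h0 h1]
      exact ih (deriv f) (deriv g) a (hf.iterate_deriv 1) (hg.iterate_deriv 1)
        (fun j hj => by
          have := h (j + 1) (by omega)
          rwa [iteratedDeriv_succ', iteratedDeriv_succ'] at this)
    have : ContDiff ℝ (((N : ℕ∞) : WithTop ℕ∞) + 1) (hp f g a) := by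
      rw [contDiff_succ_iff_deriv]
      exact ⟨hp_differentiable hdf hdg h0 h1, by simp, key⟩
    exact_mod_cast this

lemma eqOn_iteratedDeriv_closure {f h : ℝ → E} {a b : ℝ} (hab : a < b) {N : ℕ}
    (hf : ContDiff ℝ (⊤ : ℕ∞) f) (hh : ContDiff ℝ (N : ℕ∞) h)
    (he : EqOn f h (Ioo a b)) :
    ∀ j ≤ N, ∀ c ∈ Icc a b, iteratedDeriv j f c = iteratedDeriv j h c := by
  intro j hj c hc
  have h1 : EqOn (iteratedDeriv j f) (iteratedDeriv j h) (Ioo a b) :=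
    he.iteratedDeriv_of_isOpen isOpen_Ioo j
  have h2 := h1.closure (hf.continuous_iteratedDeriv j (by exact_mod_cast le_top))
    (hh.continuous_iteratedDeriv j (by exact_mod_cast hj))
  rw [closure_Ioo hab.ne] at h2
  exact h2 hc

lemma clm_iteratedDeriv {F : Type*} [NormedAddCommGroup F] [NormedSpace ℝ F]
    (L : E →L[ℝ] F) {f : ℝ → E} (hf : ContDiff ℝ (⊤ : ℕ∞) f) (n : ℕ) (x : ℝ) :
    iteratedDeriv n (fun y => L (f y)) x = L (iteratedDeriv n f x) := by
  rw [iteratedDeriv_eq_iteratedFDeriv, iteratedDeriv_eq_iteratedFDeriv]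
  have : (fun y => L (f y)) = L ∘ f := rfl
  rw [this, L.iteratedFDeriv_comp_left (x := x) hf.contDiffAt (by exact_mod_cast le_top)]
  rfl

lemma iteratedDeriv_comp_const_sub' (n : ℕ) (f : ℝ → E) (c x : ℝ) :
    iteratedDeriv n (fun y => f (c - y)) x = (-1 : ℝ) ^ n • iteratedDeriv n f (c - x) := by
  have h1 : (fun y => f (c - y)) = fun y => (fun z => f (c + z)) (-y) := by
    funext y; rw [sub_eq_add_neg]
  rw [h1, iteratedDeriv_comp_neg n (fun z => f (c + z)) x,
    iteratedDeriv_comp_const_add n f c]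
  simp [sub_eq_add_neg]

lemma lipschitzOnWith_congr {f g : ℝ → E} {K : NNReal} {s : Set ℝ}
    (h : LipschitzOnWith K f s) (he : EqOn f g s) : LipschitzOnWith K g s := by
  intro x hx y hy
  rw [← he hx, ← he hy]
  exact h hx hy

lemma lipschitzOnWith_Icc_union {f : ℝ → E} {K : NNReal} {a b c : ℝ}
    (hab : a ≤ b) (hbc : b ≤ c)
    (h1 : LipschitzOnWith K f (Icc a b)) (h2 : LipschitzOnWith K f (Icc b c)) :
    LipschitzOnWith K f (Icc a c) := by
  rw [lipschitzOnWith_iff_dist_le_mul] at h1 h2 ⊢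
  have key : ∀ x ∈ Icc a c, ∀ y ∈ Icc a c, x ≤ y → dist (f x) (f y) ≤ K * dist x y := by
    intro x hx y hy hxy
    rcases le_total y b with h | h
    · exact h1 x ⟨hx.1, le_trans hxy h⟩ y ⟨hy.1, h⟩
    · rcases le_total b x with h' | h'
      · exact h2 x ⟨h', hx.2⟩ y ⟨le_trans h' hxy, hy.2⟩
      · calc dist (f x) (f y) ≤ dist (f x) (f b) + dist (f b) (f y) := dist_triangle _ _ _
          _ ≤ K * dist x b + K * dist b y :=
            add_le_add (h1 x ⟨hx.1, h'⟩ b ⟨hab, le_rfl⟩) (h2 b ⟨le_rfl, hbc⟩ y ⟨h, hy.2⟩)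
          _ = K * (dist x b + dist b y) := by ring
          _ = K * dist x y := by
            rw [Real.dist_eq, Real.dist_eq, Real.dist_eq, abs_of_nonpos (by linarith),
              abs_of_nonpos (by linarith), abs_of_nonpos (by linarith)]
            ring
  intro x hx y hy
  rcases le_total x y with h | h
  · exact key x hx y hy h
  · rw [dist_comm, dist_comm x y]; exact key y hy x hx h

lemma lipschitz_of_periodic {f : ℝ → E} {K : NNReal} (hper : Function.Periodic f 4)
    (h : LipschitzOnWith K f (Icc (-1) 3)) : LipschitzWith K f := by
  have hshift : ∀ n : ℕ, LipschitzOnWith K f (Icc (-1 + 4 * n) (3 + 4 * n)) := by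
    intro n
    rw [lipschitzOnWith_iff_dist_le_mul] at h ⊢
    intro x hx y hy
    have hx' : x - n * 4 ∈ Icc (-1 : ℝ) 3 := by
      constructor <;> [linarith [hx.1]; linarith [hx.2]]
    have hy' : y - n * 4 ∈ Icc (-1 : ℝ) 3 := by
      constructor <;> [linarith [hy.1]; linarith [hy.2]]
    have := h _ hx' _ hy'
    rwa [hper.sub_nat_mul_eq n, hper.sub_nat_mul_eq n, dist_sub_right] at this
  have hchain : ∀ n : ℕ, LipschitzOnWith K f (Icc (-1) (3 + 4 * n)) := by
    intro n
    induction n with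
    | zero => simpa using h
    | succ n ih =>
      have h2 := hshift (n + 1)
      have e1 : (-1 : ℝ) + 4 * ((n : ℝ) + 1) = 3 + 4 * n := by ring
      have h2' : LipschitzOnWith K f (Icc (3 + 4 * (n : ℝ)) (3 + 4 * ((n : ℝ) + 1))) := by
        have := hshift (n + 1)
        convert this using 2 <;> push_cast <;> ring
      have h3 := lipschitzOnWith_Icc_union (by have h4 : (0:ℝ) ≤ (n:ℝ) := Nat.cast_nonneg n; linarith) (by linarith) ih h2'
      convert h3 using 2
      push_cast; ring
  rw [lipschitzWith_iff_dist_le_mul]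
  have key : ∀ x y : ℝ, x ≤ y → dist (f x) (f y) ≤ K * dist x y := by
    intro x y hxy
    set k : ℤ := ⌊(x + 1) / 4⌋ with hk
    have hx1 : (-1 : ℝ) ≤ x - k * 4 := by
      have := Int.floor_le ((x + 1) / 4)
      rw [← hk] at this
      linarith
    have hx2 : x - k * 4 < 3 := by
      have := Int.lt_floor_add_one ((x + 1) / 4)
      rw [← hk] at this
      linarith
    set n : ℕ := ⌈(y - k * 4 - 3) / 4⌉₊ with hn
    have hy2 : y - k * 4 ≤ 3 + 4 * n := by
      have := Nat.le_ceil ((y - k * 4 - 3) / 4)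
      rw [← hn] at this
      linarith
    have hmx : x - k * 4 ∈ Icc (-1 : ℝ) (3 + 4 * n) := ⟨hx1, by have h4 : (0:ℝ) ≤ (n:ℝ) := Nat.cast_nonneg n; linarith⟩
    have hmy : y - k * 4 ∈ Icc (-1 : ℝ) (3 + 4 * n) := ⟨by linarith, hy2⟩
    have := (lipschitzOnWith_iff_dist_le_mul.1 (hchain n)) _ hmx _ hmy
    rwa [hper.sub_int_mul_eq k, hper.sub_int_mul_eq k, dist_sub_right] at this
  intro x y
  rcases le_total x y with h' | h'
  · exact key x y h'
  · rw [dist_comm, dist_comm x y]; exact key y x h'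


/-- aux -/
def reflPL : EuclideanSpace ℝ (Fin 2) →L[ℝ] EuclideanSpace ℝ (Fin 2) :=
  LinearMap.toContinuousLinearMap
    { toFun := reflP
      map_add' := by
        intro u v; ext i; by_cases h : i = 0 <;>
          simp [reflP, h, PiLp.add_apply] <;> ring
      map_smul' := by
        intro c v; ext i; by_cases h : i = 0 <;>
          simp [reflP, h, PiLp.smul_apply, smul_eq_mul] <;> ring }

lemma reflPL_apply (v : EuclideanSpace ℝ (Fin 2)) : reflPL v = reflP v := rfl

lemma reflP_apply_zero (v : EuclideanSpace ℝ (Fin 2)) : reflP v 0 = v 0 := by simp [reflP]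

lemma reflP_apply_one (v : EuclideanSpace ℝ (Fin 2)) : reflP v 1 = -(v 1) := by
  simp [reflP, show (1 : Fin 2) ≠ 0 by decide]

lemma wrap4_mem (x : ℝ) : wrap4 x ∈ Ico (-1 : ℝ) 3 := by
  have h1 := Int.fract_nonneg ((x + 1) / 4)
  have h2 := Int.fract_lt_one ((x + 1) / 4)
  constructor <;> simp only [wrap4] <;> linarith

lemma wrap4_eq {x : ℝ} (hx : x ∈ Ico (-1 : ℝ) 3) : wrap4 x = x := by
  have : Int.fract ((x + 1) / 4) = (x + 1) / 4 :=
    Int.fract_eq_self.2 ⟨by linarith [hx.1], by linarith [hx.2]⟩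
  simp only [wrap4, this]; ring

lemma wrap4_add_four (x : ℝ) : wrap4 (x + 4) = wrap4 x := by
  have : (x + 4 + 1) / 4 = (x + 1) / 4 + 1 := by ring
  simp only [wrap4, this, Int.fract_add_one]

lemma reflCurve_periodic (γ : ℝ → EuclideanSpace ℝ (Fin 2)) :
    Function.Periodic (reflCurve γ) 4 := by
  intro x; simp only [reflCurve, wrap4_add_four]

lemma wrap4_eq_sub (x : ℝ) : wrap4 x = x - (⌊(x + 1) / 4⌋ : ℤ) * 4 := by
  simp only [wrap4, Int.fract]
  push_cast
  ring

lemma reflCurve_eq_left (γ : ℝ → EuclideanSpace ℝ (Fin 2)) {x : ℝ}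
    (hx : x ∈ Icc (-1 : ℝ) 1) : reflCurve γ x = γ x := by
  have hw : wrap4 x = x := wrap4_eq ⟨hx.1, by linarith [hx.2]⟩
  simp only [reflCurve, hw, if_pos hx.2]

lemma reflCurve_eq_right (γ : ℝ → EuclideanSpace ℝ (Fin 2)) {x : ℝ}
    (hx : x ∈ Ioo (1 : ℝ) 3) : reflCurve γ x = reflP (γ (2 - x)) := by
  have hw : wrap4 x = x := wrap4_eq ⟨by linarith [hx.1], hx.2⟩
  simp only [reflCurve, hw, if_neg (not_le.2 hx.1)]

lemma reflCurve_eq_far_left (γ : ℝ → EuclideanSpace ℝ (Fin 2)) {x : ℝ}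
    (hx : x ∈ Ioo (-3 : ℝ) (-1)) : reflCurve γ x = reflP (γ (-2 - x)) := by
  have hw : wrap4 x = x + 4 := by
    rw [← wrap4_add_four]
    exact wrap4_eq ⟨by linarith [hx.1], by linarith [hx.2]⟩
  have h2 : ¬ (x + 4 ≤ 1) := by linarith [hx.1]
  simp only [reflCurve, hw, if_neg h2]
  congr 1
  ring

lemma eval_iteratedDeriv {γ : ℝ → EuclideanSpace ℝ (Fin 2)}
    (hγ : ContDiff ℝ (⊤ : ℕ∞) γ) (i : Fin 2) (n : ℕ) (x : ℝ) :
    iteratedDeriv n (fun y => γ y i) x = iteratedDeriv n γ x i := by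
  have := clm_iteratedDeriv (EuclideanSpace.proj i) hγ n x
  simpa using this

lemma lipschitzOnWith_weaken {f : ℝ → E} {K K' : NNReal} {s : Set ℝ}
    (h : LipschitzOnWith K f s) (hk : K ≤ K') : LipschitzOnWith K' f s :=
  fun x hx y hy => le_trans (h hx hy)
    (mul_le_mul_left (by exact_mod_cast hk) _)

lemma periodic_iteratedDeriv {f : ℝ → E} (hf : Function.Periodic f 4) (n : ℕ) :
    Function.Periodic (iteratedDeriv n f) 4 := by
  intro x
  have h0 : (fun z => f (z + 4)) = f := funext hf
  have h2 := iteratedDeriv_comp_add_const n f 4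
  rw [h0] at h2
  exact (congrFun h2 x).symm

lemma lip_of_smooth_on_Icc {f : ℝ → E} (hf : ContDiff ℝ (⊤ : ℕ∞) f) (n : ℕ) (a b : ℝ) :
    ∃ K : NNReal, LipschitzOnWith K (iteratedDeriv n f) (Icc a b) := by
  have hsm : ContDiff ℝ (⊤ : ℕ∞) (iteratedDeriv n f) := by
    rw [iteratedDeriv_eq_iterate]; exact hf.iterate_deriv n
  have hg : Differentiable ℝ (iteratedDeriv n f) :=
    hsm.differentiable (by simp)
  have hg' : Continuous (deriv (iteratedDeriv n f)) := by
    have := (hsm.of_le (by exact_mod_cast le_top : ((1:ℕ):WithTop ℕ∞) ≤ ((⊤:ℕ∞):WithTop ℕ∞)))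
    exact (contDiff_one_iff_deriv.1 this).2
  obtain ⟨C, hC⟩ := (isCompact_Icc (a := a) (b := b)).exists_bound_of_continuousOn
    hg'.continuousOn
  refine ⟨C.toNNReal, (convex_Icc a b).lipschitzOnWith_of_nnnorm_deriv_le
    (fun x _ => (hg x)) ?_⟩
  intro x hx
  rw [← norm_toNNReal]
  exact Real.toNNReal_le_toNNReal (hC x hx)

section Curve

variable {γ : ℝ → EuclideanSpace ℝ (Fin 2)}

/-- right piece at seam 1 -/
def F1 (γ : ℝ → EuclideanSpace ℝ (Fin 2)) : ℝ → EuclideanSpace ℝ (Fin 2) :=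
  fun x => reflPL (γ (2 - x))

/-- left piece at seam -1 -/
def F2 (γ : ℝ → EuclideanSpace ℝ (Fin 2)) : ℝ → EuclideanSpace ℝ (Fin 2) :=
  fun x => reflPL (γ (-2 - x))

lemma smooth_const_sub (hγ : ContDiff ℝ (⊤ : ℕ∞) γ) (c : ℝ) :
    ContDiff ℝ (⊤ : ℕ∞) (fun x => γ (c - x)) :=
  hγ.comp (contDiff_const.sub contDiff_id)

lemma F1_smooth (hγ : ContDiff ℝ (⊤ : ℕ∞) γ) : ContDiff ℝ (⊤ : ℕ∞) (F1 γ) :=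
  reflPL.contDiff.comp (smooth_const_sub hγ 2)

lemma F2_smooth (hγ : ContDiff ℝ (⊤ : ℕ∞) γ) : ContDiff ℝ (⊤ : ℕ∞) (F2 γ) :=
  reflPL.contDiff.comp (smooth_const_sub hγ (-2))

lemma iteratedDeriv_F1 (hγ : ContDiff ℝ (⊤ : ℕ∞) γ) (j : ℕ) (x : ℝ) :
    iteratedDeriv j (F1 γ) x = (-1 : ℝ) ^ j • reflPL (iteratedDeriv j γ (2 - x)) := by
  have h1 := clm_iteratedDeriv reflPL (smooth_const_sub hγ 2) j x
  rw [show F1 γ = fun y => reflPL ((fun z => γ (2 - z)) y) from rfl, h1,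
    iteratedDeriv_comp_const_sub' j γ 2 x, _root_.map_smul]

lemma iteratedDeriv_F2 (hγ : ContDiff ℝ (⊤ : ℕ∞) γ) (j : ℕ) (x : ℝ) :
    iteratedDeriv j (F2 γ) x = (-1 : ℝ) ^ j • reflPL (iteratedDeriv j γ (-2 - x)) := by
  have h1 := clm_iteratedDeriv reflPL (smooth_const_sub hγ (-2)) j x
  rw [show F2 γ = fun y => reflPL ((fun z => γ (-2 - z)) y) from rfl, h1,
    iteratedDeriv_comp_const_sub' j γ (-2) x, _root_.map_smul]

/-- matching condition -/
def Mat (γ : ℝ → EuclideanSpace ℝ (Fin 2)) (N : ℕ) : Prop :=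
  ∀ j ≤ N, ∀ a ∈ ({-1, 1} : Set ℝ),
    iteratedDeriv j γ a = (-1 : ℝ) ^ j • reflPL (iteratedDeriv j γ a)

lemma even_match {j : ℕ} (hj : Even j) (v : EuclideanSpace ℝ (Fin 2)) :
    (v = (-1 : ℝ) ^ j • reflPL v) ↔ v 1 = 0 := by
  rw [hj.neg_one_pow, one_smul]
  constructor
  · intro h
    have := congrArg (· 1) h
    rw [reflPL_apply, reflP_apply_one] at this
    linarith
  · intro h
    ext i
    fin_cases i <;> simp [reflPL_apply, reflP, h]

lemma odd_match {j : ℕ} (hj : Odd j) (v : EuclideanSpace ℝ (Fin 2)) :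
    (v = (-1 : ℝ) ^ j • reflPL v) ↔ v 0 = 0 := by
  rw [hj.neg_one_pow, neg_one_smul]
  constructor
  · intro h
    have := congrArg (· 0) h
    rw [PiLp.neg_apply, reflPL_apply, reflP_apply_zero] at this
    linarith
  · intro h
    ext i
    fin_cases i <;> simp [reflPL_apply, reflP, h]

lemma mat_iff (hγ : ContDiff ℝ (⊤ : ℕ∞) γ)
    (hb : ∀ x ∈ ({-1, 1} : Set ℝ), γ x 1 = 0) (m : ℕ) :
    Mat γ (2 * m) ↔ (∀ k : ℕ, 1 ≤ k → k ≤ m → ∀ x ∈ ({-1, 1} : Set ℝ),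
        iteratedDeriv (2 * k) (fun y => γ y 1) x = 0 ∧
        iteratedDeriv (2 * k - 1) (fun y => γ y 0) x = 0) := by
  constructor
  · intro hmat k hk1 hk2 a ha
    constructor
    · rw [eval_iteratedDeriv hγ 1]
      exact (even_match ⟨k, (two_mul k)⟩ _).1 (hmat (2 * k) (by omega) a ha)
    · rw [eval_iteratedDeriv hγ 0]
      exact (odd_match ⟨k - 1, by omega⟩ _).1 (hmat (2 * k - 1) (by omega) a ha)
  · intro hc j hj a ha
    rcases Nat.even_or_odd j with he | ho
    · rw [even_match he]
      obtain ⟨k, hk⟩ := he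
      rcases Nat.eq_zero_or_pos k with hk0 | hk0
      · have : j = 0 := by omega
        subst this
        rw [iteratedDeriv_zero]
        exact hb a ha
      · rw [← eval_iteratedDeriv hγ 1]
        have hjk : j = 2 * k := by omega
        subst hjk
        exact (hc k hk0 (by omega) a ha).1
    · rw [odd_match ho]
      obtain ⟨k, hk⟩ := ho
      rw [← eval_iteratedDeriv hγ 0]
      have hjk : j = 2 * (k + 1) - 1 := by omega
      subst hjk
      exact (hc (k + 1) (by omega) (by omega) a ha).2

end Curve


end Aux17

/-- regularity of the reflected curve (Remark 4.15, equation (4.28)). -/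
theorem statement17
    (γ : ℝ → EuclideanSpace ℝ (Fin 2))
    (hγ : ContDiff ℝ (⊤ : ℕ∞) γ)
    (himm : ∀ x ∈ Icc (-1:ℝ) 1, deriv γ x ≠ 0)
    (hb : ∀ x ∈ ({-1, 1} : Set ℝ), γ x 1 = 0 ∧ deriv γ x 0 = 0)
    (m : ℕ) (hm : 1 ≤ m) :
    (ContDiff ℝ ((2 * m : ℕ) : ℕ∞) (reflCurve γ) ∧
      ∃ K : NNReal, LipschitzWith K (iteratedDeriv (2 * m) (reflCurve γ)))
    ↔ (∀ k : ℕ, 1 ≤ k → k ≤ m → ∀ x ∈ ({-1, 1} : Set ℝ),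
        iteratedDeriv (2 * k) (fun y => γ y 1) x = 0 ∧
        iteratedDeriv (2 * k - 1) (fun y => γ y 0) x = 0) := by
  have hbs : ∀ x ∈ ({-1, 1} : Set ℝ), γ x 1 = 0 := fun x hx => (hb x hx).1
  have hbm1 : γ (-1 : ℝ) 1 = 0 := hbs (-1) (by simp)
  constructor
  · rintro ⟨hC, -⟩
    refine (mat_iff hγ hbs m).1 ?_
    intro j hj a ha
    simp only [mem_insert_iff, mem_singleton_iff] at ha
    rcases ha with ha | ha <;> subst ha
    · -- a = -1
      have e1 := eqOn_iteratedDeriv_closure (show (-1:ℝ) < 1 by norm_num) hγ hC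
        (fun z hz => (reflCurve_eq_left γ ⟨hz.1.le, hz.2.le⟩).symm) j hj (-1)
        ⟨le_rfl, by norm_num⟩
      have e2 := eqOn_iteratedDeriv_closure (show (-3:ℝ) < -1 by norm_num) (F2_smooth hγ) hC
        (fun z hz => by rw [reflCurve_eq_far_left γ hz]; rfl) j hj (-1)
        ⟨by norm_num, le_rfl⟩
      calc iteratedDeriv j γ (-1) = iteratedDeriv j (reflCurve γ) (-1) := e1
        _ = iteratedDeriv j (F2 γ) (-1) := e2.symm
        _ = (-1 : ℝ) ^ j • reflPL (iteratedDeriv j γ (-2 - (-1))) := iteratedDeriv_F2 hγ j (-1)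
        _ = (-1 : ℝ) ^ j • reflPL (iteratedDeriv j γ (-1)) := by norm_num
    · -- a = 1
      have e1 := eqOn_iteratedDeriv_closure (show (-1:ℝ) < 1 by norm_num) hγ hC
        (fun z hz => (reflCurve_eq_left γ ⟨hz.1.le, hz.2.le⟩).symm) j hj 1
        ⟨by norm_num, le_rfl⟩
      have e2 := eqOn_iteratedDeriv_closure (show (1:ℝ) < 3 by norm_num) (F1_smooth hγ) hC
        (fun z hz => by rw [reflCurve_eq_right γ hz]; rfl) j hj 1
        ⟨le_rfl, by norm_num⟩
      calc iteratedDeriv j γ 1 = iteratedDeriv j (reflCurve γ) 1 := e1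
        _ = iteratedDeriv j (F1 γ) 1 := e2.symm
        _ = (-1 : ℝ) ^ j • reflPL (iteratedDeriv j γ (2 - 1)) := iteratedDeriv_F1 hγ j 1
        _ = (-1 : ℝ) ^ j • reflPL (iteratedDeriv j γ 1) := by norm_num
  · intro hc
    have hmat : Mat γ (2 * m) := (mat_iff hγ hbs m).2 hc
    have hs1 : ∀ j ≤ 2 * m, iteratedDeriv j γ 1 = iteratedDeriv j (F1 γ) 1 := by
      intro j hj
      rw [iteratedDeriv_F1 hγ, show (2:ℝ) - 1 = 1 by norm_num]
      exact hmat j hj 1 (by simp)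
    have hs2 : ∀ j ≤ 2 * m, iteratedDeriv j (F2 γ) (-1) = iteratedDeriv j γ (-1) := by
      intro j hj
      rw [iteratedDeriv_F2 hγ, show (-2:ℝ) - (-1) = -1 by norm_num]
      exact (hmat j hj (-1) (by simp)).symm
    have hglue1 : ContDiff ℝ ((2 * m : ℕ) : ℕ∞) (hp γ (F1 γ) 1) :=
      hp_contDiff (2 * m) γ (F1 γ) 1 hγ (F1_smooth hγ) hs1
    have hglue2 : ContDiff ℝ ((2 * m : ℕ) : ℕ∞) (hp (F2 γ) γ (-1)) :=
      hp_contDiff (2 * m) (F2 γ) γ (-1) (F2_smooth hγ) hγ hs2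
    have hrm1 : reflP (γ (-1)) = γ (-1) := by
      ext i
      fin_cases i <;> simp [reflP, hbm1]
    have hkey : ∀ y ∈ Ico (-1:ℝ) 3, ContDiffAt ℝ ((2 * m : ℕ) : ℕ∞) (reflCurve γ) y := by
      intro y hy
      rcases eq_or_lt_of_le hy.1 with h1 | h1
      · -- y = -1
        rw [← h1]
        refine hglue2.contDiffAt.congr_of_eventuallyEq ?_
        refine Filter.eventuallyEq_of_mem
          (isOpen_Ioo.mem_nhds (show (-1:ℝ) ∈ Ioo (-3) 1 by norm_num)) ?_
        intro z hz
        by_cases hz1 : z ≤ -1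
        · rcases eq_or_lt_of_le hz1 with hz2 | hz2
          · subst hz2
            rw [reflCurve_eq_left γ ⟨le_rfl, by norm_num⟩]
            simp only [hp, if_pos le_rfl, F2, reflPL_apply,
              show (-2:ℝ) - (-1) = -1 by norm_num]
            exact hrm1.symm
          · rw [reflCurve_eq_far_left γ ⟨hz.1, hz2⟩]
            simp only [hp, if_pos hz1, F2, reflPL_apply]
        · push_neg at hz1
          rw [reflCurve_eq_left γ ⟨hz1.le, hz.2.le⟩]
          simp only [hp, if_neg (not_le.2 hz1)]
      · rcases lt_trichotomy y 1 with h2 | h2 | h2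
        · exact ((hγ.of_le (by exact_mod_cast le_top)).contDiffAt).congr_of_eventuallyEq
            (Filter.eventuallyEq_of_mem (isOpen_Ioo.mem_nhds ⟨h1, h2⟩)
              (fun z hz => reflCurve_eq_left γ ⟨hz.1.le, hz.2.le⟩))
        · subst h2
          refine hglue1.contDiffAt.congr_of_eventuallyEq ?_
          refine Filter.eventuallyEq_of_mem
            (isOpen_Ioo.mem_nhds (show (1:ℝ) ∈ Ioo (-1) 3 by norm_num)) ?_
          intro z hz
          by_cases hz1 : z ≤ 1
          · rw [reflCurve_eq_left γ ⟨hz.1.le, hz1⟩]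
            simp only [hp, if_pos hz1]
          · push_neg at hz1
            rw [reflCurve_eq_right γ ⟨hz1, hz.2⟩]
            simp only [hp, if_neg (not_le.2 hz1), F1, reflPL_apply]
        · exact (((F1_smooth hγ).of_le (by exact_mod_cast le_top)).contDiffAt).congr_of_eventuallyEq
            (Filter.eventuallyEq_of_mem (isOpen_Ioo.mem_nhds ⟨h2, hy.2⟩)
              (fun z hz => by rw [reflCurve_eq_right γ hz]; rfl))
    have hCD : ContDiff ℝ ((2 * m : ℕ) : ℕ∞) (reflCurve γ) := by
      rw [contDiff_iff_contDiffAt]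
      intro x
      have h1 : ContDiffAt ℝ ((2 * m : ℕ) : ℕ∞)
          (reflCurve γ ∘ fun z => z - (⌊(x + 1) / 4⌋ : ℤ) * 4) x := by
        refine ContDiffAt.comp x ?_ ((contDiff_id.sub contDiff_const).contDiffAt)
        show ContDiffAt ℝ _ (reflCurve γ) (x - (⌊(x + 1) / 4⌋ : ℤ) * 4)
        rw [show x - (⌊(x + 1) / 4⌋ : ℤ) * 4 = wrap4 x from (wrap4_eq_sub x).symm]
        exact hkey _ (wrap4_mem x)
      have h2 : (reflCurve γ ∘ fun z => z - (⌊(x + 1) / 4⌋ : ℤ) * 4) = reflCurve γ :=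
        funext fun z => (reflCurve_periodic γ).sub_int_mul_eq _
      rwa [h2] at h1
    refine ⟨hCD, ?_⟩
    have hDper := periodic_iteratedDeriv (reflCurve_periodic γ) (2 * m)
    obtain ⟨K1, hK1⟩ := lip_of_smooth_on_Icc hγ (2 * m) (-1) 1
    obtain ⟨K2, hK2⟩ := lip_of_smooth_on_Icc (F1_smooth hγ) (2 * m) 1 3
    have hA : EqOn (iteratedDeriv (2 * m) γ) (iteratedDeriv (2 * m) (reflCurve γ))
        (Icc (-1) 1) := fun c hc =>
      eqOn_iteratedDeriv_closure (show (-1:ℝ) < 1 by norm_num) hγ hCD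
        (fun z hz => (reflCurve_eq_left γ ⟨hz.1.le, hz.2.le⟩).symm) (2 * m) le_rfl c hc
    have hB : EqOn (iteratedDeriv (2 * m) (F1 γ)) (iteratedDeriv (2 * m) (reflCurve γ))
        (Icc 1 3) := fun c hc =>
      eqOn_iteratedDeriv_closure (show (1:ℝ) < 3 by norm_num) (F1_smooth hγ) hCD
        (fun z hz => by rw [reflCurve_eq_right γ hz]; rfl) (2 * m) le_rfl c hc
    have l1 : LipschitzOnWith (K1 ⊔ K2) (iteratedDeriv (2 * m) (reflCurve γ)) (Icc (-1) 1) :=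
      lipschitzOnWith_weaken (lipschitzOnWith_congr hK1 hA) le_sup_left
    have l2 : LipschitzOnWith (K1 ⊔ K2) (iteratedDeriv (2 * m) (reflCurve γ)) (Icc 1 3) :=
      lipschitzOnWith_weaken (lipschitzOnWith_congr hK2 hB) le_sup_right
    exact ⟨K1 ⊔ K2, lipschitz_of_periodic hDper
      (lipschitzOnWith_Icc_union (by norm_num) (by norm_num) l1 l2)⟩


end
end
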